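/- arXiv:2506.06209 — 5 statements merged into one kernel-verified Lean document; each statement's English description precedes it below -/
import Mathlib

section
/- Let I be a monomial ideal with minimal generating set {m1, m2, m3} such that m3 divides lcm(m1, m2). Then reg(I) = max{ deg lcm(m1, m3), deg lcm(m2, m3) } − 1. -/
open MvPolynomial

namespace RegAux

variable {K : Type*} [Field K] {σ : Type*}

lemma eq_C_of_isHomogeneous_zero {p : MvPolynomial σ K} (h : p.IsHomogeneous 0) :
    p = C (constantCoeff p) := by
  classical
  ext d
  by_cases hd : d = 0
  · subst hd; simp [constantCoeff_eq, coeff_C]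
  · rw [h.coeff_eq_zero (by simpa [Finsupp.degree_eq_zero_iff] using hd), coeff_C,
      if_neg (Ne.symm hd)]

lemma constantCoeff_eq_zero_of_isHomogeneous {p : MvPolynomial σ K} {n : ℕ}
    (h : p.IsHomogeneous n) (hn : n ≠ 0) : constantCoeff p = 0 := by
  rw [constantCoeff_eq]
  exact h.coeff_eq_zero (by simpa using Ne.symm hn)

lemma hc_self {p : MvPolynomial σ K} {n : ℕ} (h : p.IsHomogeneous n) :
    homogeneousComponent n p = p := by
  rw [homogeneousComponent_of_mem h, if_pos rfl]

lemma hc_mul {g : MvPolynomial σ K} {e : ℕ} (hg : g.IsHomogeneous e)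
    (f : MvPolynomial σ K) (n : ℕ) :
    homogeneousComponent n (f * g)
      = if e ≤ n then homogeneousComponent (n - e) f * g else 0 := by
  have key : ∀ v : σ →₀ ℕ, ∀ c : K, homogeneousComponent n (monomial v c * g)
      = (if e ≤ n then homogeneousComponent (n - e) (monomial v c) else 0) * g := by
    intro v c
    have h1 : (monomial v c * g).IsHomogeneous (v.degree + e) :=
      (isHomogeneous_monomial c rfl).mul hg
    rw [homogeneousComponent_of_mem h1]
    by_cases he : e ≤ n
    · rw [if_pos he, homogeneousComponent_of_mem (isHomogeneous_monomial c rfl)]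
      by_cases h2 : n = v.degree + e
      · rw [if_pos h2, if_pos (by omega)]
      · rw [if_neg h2, if_neg (by omega), zero_mul]
    · rw [if_neg he, if_neg (by omega), zero_mul]
  calc homogeneousComponent n (f * g)
      = ∑ v ∈ f.support, homogeneousComponent n (monomial v (coeff v f) * g) := by
        conv_lhs => rw [f.as_sum, Finset.sum_mul, map_sum]
    _ = ∑ v ∈ f.support, (if e ≤ n then homogeneousComponent (n - e) (monomial v (coeff v f))
          else 0) * g := Finset.sum_congr rfl fun v _ => key v _
    _ = (if e ≤ n then homogeneousComponent (n - e) f else 0) * g := by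
        rw [← Finset.sum_mul]
        congr 1
        split_ifs with h
        · conv_rhs => rw [f.as_sum, map_sum]
        · simp
    _ = if e ≤ n then homogeneousComponent (n - e) f * g else 0 := by
        split_ifs <;> simp

lemma isHomogeneous_sum' {γ : Type*} (s : Finset γ) (F : γ → MvPolynomial σ K) (n : ℕ)
    (h : ∀ x ∈ s, F x = 0 ∨ (F x).IsHomogeneous n) : (∑ x ∈ s, F x).IsHomogeneous n := by
  rw [← mem_homogeneousSubmodule]
  refine Submodule.sum_mem _ fun x hx => ?_
  rcases h x hx with h0 | h1
  · rw [h0]; exact Submodule.zero_mem _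
  · exact h1

section Matrices

lemma nilpotent_of_degree_lt {A : Type*} [CommRing A] {κ : Type*} [Fintype κ] [DecidableEq κ]
    (M : Matrix κ κ A) (g : κ → ℕ) (h : ∀ a b, M a b ≠ 0 → g a < g b) : IsNilpotent M := by
  refine ⟨(Finset.univ.sup g) + 1, ?_⟩
  have key : ∀ n (a b : κ), (M ^ n) a b ≠ 0 → g a + n ≤ g b := by
    intro n
    induction n with
    | zero =>
      intro a b hab
      rw [pow_zero] at hab
      rcases eq_or_ne a b with rfl | hne
      · omega
      · rw [Matrix.one_apply_ne hne] at hab; exact absurd rfl hab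
    | succ n ih =>
      intro a b hab
      rw [pow_succ] at hab
      obtain ⟨l, hl⟩ : ∃ l, (M ^ n) a l * M l b ≠ 0 := by
        by_contra hc
        push_neg at hc
        exact hab (by rw [Matrix.mul_apply]; exact Finset.sum_eq_zero fun l _ => hc l)
      have h1 := ih a l (left_ne_zero_of_mul hl)
      have h2 := h l b (right_ne_zero_of_mul hl)
      omega
  ext a b
  rw [Matrix.zero_apply]
  by_contra hab
  have h1 := key _ a b hab
  have h2 : g b ≤ Finset.univ.sup g := Finset.le_sup (Finset.mem_univ b)
  omega

lemma isUnit_of_graded {κ : Type*} [Fintype κ] [DecidableEq κ]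
    (M : Matrix κ κ (MvPolynomial σ K)) (g : κ → ℕ)
    (hM : ∀ a b, M a b = 0 ∨ (g a ≤ g b ∧ (M a b).IsHomogeneous (g b - g a)))
    (hcc : ∀ a b, constantCoeff (M a b) = if a = b then 1 else 0) : IsUnit M := by
  have hT : ∀ a b, (M - 1) a b ≠ 0 → g a < g b := by
    intro a b hT
    rcases hM a b with h0 | ⟨hle, hhom⟩
    · exfalso
      rcases eq_or_ne a b with rfl | hne
      · have := hcc a a; rw [h0, if_pos rfl] at this; simp at this
      · apply hT
        rw [Matrix.sub_apply, h0, Matrix.one_apply_ne hne, sub_zero]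
    · rcases lt_or_eq_of_le hle with hlt | heq
      · exact hlt
      · exfalso
        apply hT
        have hzero : g b - g a = 0 := by omega
        rw [hzero] at hhom
        have := eq_C_of_isHomogeneous_zero hhom
        rw [Matrix.sub_apply, this, hcc a b, Matrix.one_apply]
        split_ifs <;> simp
  have hnil : IsNilpotent (M - 1) := nilpotent_of_degree_lt _ g hT
  have := hnil.isUnit_one_add
  rwa [add_sub_cancel] at this

lemma card_eq_of_inverse {α β : Type*} [Fintype α] [Fintype β] [DecidableEq α] [DecidableEq β]
    (P : Matrix α β K) (Q : Matrix β α K) (h1 : P * Q = 1) (h2 : Q * P = 1) :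
    Fintype.card α = Fintype.card β := by
  have e : (β → K) ≃ₗ[K] (α → K) :=
    LinearEquiv.ofLinear P.mulVecLin Q.mulVecLin
      (by rw [← Matrix.mulVecLin_mul, h1, Matrix.mulVecLin_one])
      (by rw [← Matrix.mulVecLin_mul, h2, Matrix.mulVecLin_one])
  have := e.finrank_eq
  simpa [Module.finrank_fintype_fun_eq_card] using this.symm

end Matrices

section VHomSec

variable {ι : Type*} [Fintype ι]

/-- A vector in a twisted free module is homogeneous of degree `e`. -/
def VHom (t : ι → ℕ) (e : ℕ) (v : ι → MvPolynomial σ K) : Prop :=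
  ∀ a, v a = 0 ∨ (t a ≤ e ∧ (v a).IsHomogeneous (e - t a))

noncomputable def vproj (t : ι → ℕ) (d : ℕ) (v : ι → MvPolynomial σ K) :
    ι → MvPolynomial σ K :=
  fun a => if t a ≤ d then homogeneousComponent (d - t a) (v a) else 0

lemma vproj_sum {κ : Type*} (s : Finset κ) (t : ι → ℕ) (d : ℕ)
    (v : κ → ι → MvPolynomial σ K) :
    vproj t d (∑ k ∈ s, v k) = ∑ k ∈ s, vproj t d (v k) := by
  funext a
  simp only [vproj, Finset.sum_apply]
  split_ifs with h
  · rw [map_sum]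
  · simp

lemma vproj_self {t : ι → ℕ} {d : ℕ} {v : ι → MvPolynomial σ K} (hv : VHom t d v) :
    vproj t d v = v := by
  funext a
  rcases hv a with h0 | ⟨hle, hhom⟩
  · simp [vproj, h0]
  · simp [vproj, if_pos hle, hc_self hhom]

lemma vproj_smul {t : ι → ℕ} {d e : ℕ} {w : ι → MvPolynomial σ K} (hw : VHom t e w)
    (f : MvPolynomial σ K) :
    vproj t d (f • w)
      = (if e ≤ d then homogeneousComponent (d - e) f else 0) • w := by
  funext a
  have happ : (f • w) a = f * w a := rfl
  rcases hw a with h0 | ⟨hle, hhom⟩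
  · simp only [vproj, happ, h0, mul_zero, map_zero, if_pos, Pi.smul_apply, smul_eq_mul]
    split_ifs <;> simp
  · simp only [vproj, happ, Pi.smul_apply, smul_eq_mul]
    by_cases htd : t a ≤ d
    · rw [if_pos htd, hc_mul hhom]
      by_cases hed : e ≤ d
      · rw [if_pos (by omega : e - t a ≤ d - t a), if_pos hed,
          (by omega : d - t a - (e - t a) = d - e)]
      · rw [if_neg (by omega : ¬ e - t a ≤ d - t a), if_neg hed, zero_mul]
    · rw [if_neg htd]
      by_cases hed : e ≤ d
      · exact absurd (hle.trans hed) htd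
      · rw [if_neg hed, zero_mul]

lemma exists_homog_rep {κ : Type*} [Fintype κ] {t : ι → ℕ}
    {w : κ → ι → MvPolynomial σ K} {e : κ → ℕ} (hw : ∀ k, VHom t (e k) (w k))
    {v : ι → MvPolynomial σ K} {dv : ℕ} (hv : VHom t dv v)
    (hmem : v ∈ Submodule.span (MvPolynomial σ K) (Set.range w)) :
    ∃ c : κ → MvPolynomial σ K, (∑ k, c k • w k = v) ∧
      ∀ k, c k = 0 ∨ (e k ≤ dv ∧ (c k).IsHomogeneous (dv - e k)) := by
  obtain ⟨f, hf⟩ := Submodule.mem_span_range_iff_exists_fun _ |>.1 hmem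
  refine ⟨fun k => if e k ≤ dv then homogeneousComponent (dv - e k) (f k) else 0, ?_, ?_⟩
  · rw [← vproj_self hv, ← hf, vproj_sum]
    exact Finset.sum_congr rfl fun k _ => (vproj_smul (hw k) (f k)).symm
  · intro k
    dsimp only
    split_ifs with h
    · right; exact ⟨h, homogeneousComponent_isHomogeneous _ _⟩
    · left; rfl

end VHomSec

section Transition

variable {ι : Type*} [Fintype ι]

set_option maxHeartbeats 1000000 in
lemma transition {κ κ' : Type*} [Fintype κ] [DecidableEq κ] [Fintype κ'] [DecidableEq κ']
    {t : ι → ℕ} {w : κ → ι → MvPolynomial σ K} {e : κ → ℕ}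
    {w' : κ' → ι → MvPolynomial σ K} {e' : κ' → ℕ}
    (hw : ∀ k, VHom t (e k) (w k)) (hw' : ∀ k', VHom t (e' k') (w' k'))
    (hspan : Submodule.span (MvPolynomial σ K) (Set.range w)
      = Submodule.span (MvPolynomial σ K) (Set.range w'))
    (hmin : ∀ f : κ → MvPolynomial σ K, ∑ k, f k • w k = 0 → ∀ k, constantCoeff (f k) = 0)
    (hmin' : ∀ f : κ' → MvPolynomial σ K, ∑ k', f k' • w' k' = 0 →
      ∀ k', constantCoeff (f k') = 0) :
    ∃ (P : Matrix κ' κ (MvPolynomial σ K)) (Q : Matrix κ κ' (MvPolynomial σ K)),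
      (∀ k, ∑ k', P k' k • w' k' = w k) ∧ (∀ k', ∑ k, Q k k' • w k = w' k') ∧
      (∀ k' k, P k' k = 0 ∨ (e' k' ≤ e k ∧ (P k' k).IsHomogeneous (e k - e' k'))) ∧
      (∀ k k', Q k k' = 0 ∨ (e k ≤ e' k' ∧ (Q k k').IsHomogeneous (e' k' - e k))) ∧
      IsUnit (P * Q) ∧ IsUnit (Q * P) ∧
      (∀ j, Fintype.card {k // e k = j} = Fintype.card {k' // e' k' = j}) := by
  have hwmem : ∀ k, w k ∈ Submodule.span (MvPolynomial σ K) (Set.range w') := fun k =>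
    hspan ▸ Submodule.subset_span ⟨k, rfl⟩
  have hw'mem : ∀ k', w' k' ∈ Submodule.span (MvPolynomial σ K) (Set.range w) := fun k' =>
    hspan.symm ▸ Submodule.subset_span ⟨k', rfl⟩
  choose P hP1 hP2 using fun k => exists_homog_rep hw' (hw k) (hwmem k)
  choose Q hQ1 hQ2 using fun k' => exists_homog_rep hw (hw' k') (hw'mem k')
  set Pm : Matrix κ' κ (MvPolynomial σ K) := fun k' k => P k k' with hPmdef
  set Qm : Matrix κ κ' (MvPolynomial σ K) := fun k k' => Q k' k with hQmdef
  -- the composite Qm * Pm expresses w in terms of w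
  have hQP : ∀ k, ∑ k'', ((Qm * Pm) k'' k) • w k'' = w k := by
    intro k
    have step : ∀ k'', ((Qm * Pm) k'' k) • w k'' = ∑ k', P k k' • (Q k' k'' • w k'') := by
      intro k''
      rw [Matrix.mul_apply, Finset.sum_smul]
      refine Finset.sum_congr rfl fun k' _ => ?_
      rw [smul_smul]
      show (Q k' k'' * P k k') • w k'' = (P k k' * Q k' k'') • w k''
      rw [mul_comm]
    calc ∑ k'', ((Qm * Pm) k'' k) • w k''
        = ∑ k'', ∑ k', P k k' • (Q k' k'' • w k'') :=
          Finset.sum_congr rfl fun k'' _ => step k''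
      _ = ∑ k', P k k' • ∑ k'', Q k' k'' • w k'' := by
          rw [Finset.sum_comm]
          exact Finset.sum_congr rfl fun k' _ => (Finset.smul_sum).symm
      _ = ∑ k', P k k' • w' k' := by simp only [hQ1]
      _ = w k := hP1 k
  have hPQ : ∀ b, ∑ a, ((Pm * Qm) a b) • w' a = w' b := by
    intro b
    have step : ∀ a, ((Pm * Qm) a b) • w' a = ∑ k, Q b k • (P k a • w' a) := by
      intro a
      rw [Matrix.mul_apply, Finset.sum_smul]
      refine Finset.sum_congr rfl fun k _ => ?_
      rw [smul_smul]
      show (P k a * Q b k) • w' a = (Q b k * P k a) • w' a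
      rw [mul_comm]
    calc ∑ a, ((Pm * Qm) a b) • w' a
        = ∑ a, ∑ k, Q b k • (P k a • w' a) := Finset.sum_congr rfl fun a _ => step a
      _ = ∑ k, Q b k • ∑ a, P k a • w' a := by
          rw [Finset.sum_comm]
          exact Finset.sum_congr rfl fun k _ => (Finset.smul_sum).symm
      _ = ∑ k, Q b k • w k := by simp only [hP1]
      _ = w' b := hQ1 b
  -- constant coefficients of the composites form the identity
  have hQPcc : ∀ a b, constantCoeff ((Qm * Pm) a b) = if a = b then 1 else 0 := by
    intro a b
    have hrel : ∑ k'', (((Qm * Pm) k'' b) - if k'' = b then 1 else 0) • w k'' = 0 := by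
      have expand : ∀ k'', (((Qm * Pm) k'' b) - if k'' = b then 1 else 0) • w k''
          = ((Qm * Pm) k'' b) • w k'' - (if k'' = b then (1:MvPolynomial σ K) else 0) • w k'' :=
        fun k'' => sub_smul _ _ _
      rw [Finset.sum_congr rfl fun k'' _ => expand k'', Finset.sum_sub_distrib, hQP b]
      have hone : ∑ k'', (if k'' = b then (1:MvPolynomial σ K) else 0) • w k'' = w b := by
        have : ∀ k'', (if k'' = b then (1:MvPolynomial σ K) else 0) • w k''
            = if k'' = b then w k'' else 0 := by
          intro k''; split_ifs <;> simp
        rw [Finset.sum_congr rfl fun k'' _ => this k'']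
        simp
      rw [hone, sub_self]
    have hc := hmin _ hrel a
    rw [map_sub] at hc
    have hite : constantCoeff (if a = b then (1:MvPolynomial σ K) else 0)
        = if a = b then 1 else 0 := by split_ifs <;> simp
    rw [hite] at hc
    exact sub_eq_zero.mp hc
  have hPQcc : ∀ a b, constantCoeff ((Pm * Qm) a b) = if a = b then 1 else 0 := by
    intro a b
    have hrel : ∑ a', (((Pm * Qm) a' b) - if a' = b then 1 else 0) • w' a' = 0 := by
      have expand : ∀ a', (((Pm * Qm) a' b) - if a' = b then 1 else 0) • w' a'
          = ((Pm * Qm) a' b) • w' a' - (if a' = b then (1:MvPolynomial σ K) else 0) • w' a' :=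
        fun a' => sub_smul _ _ _
      rw [Finset.sum_congr rfl fun a' _ => expand a', Finset.sum_sub_distrib, hPQ b]
      have hone : ∑ a', (if a' = b then (1:MvPolynomial σ K) else 0) • w' a' = w' b := by
        have : ∀ a', (if a' = b then (1:MvPolynomial σ K) else 0) • w' a'
            = if a' = b then w' a' else 0 := by
          intro a'; split_ifs <;> simp
        rw [Finset.sum_congr rfl fun a' _ => this a']
        simp
      rw [hone, sub_self]
    have hc := hmin' _ hrel a
    rw [map_sub] at hc
    have hite : constantCoeff (if a = b then (1:MvPolynomial σ K) else 0)
        = if a = b then 1 else 0 := by split_ifs <;> simp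
    rw [hite] at hc
    exact sub_eq_zero.mp hc
  -- graded structure of the composites
  have hQPs : ∀ a b, (Qm * Pm) a b = 0 ∨
      (e a ≤ e b ∧ ((Qm * Pm) a b).IsHomogeneous (e b - e a)) := by
    intro a b
    by_cases hle : e a ≤ e b
    · right
      refine ⟨hle, ?_⟩
      rw [Matrix.mul_apply]
      refine isHomogeneous_sum' _ _ _ fun k' _ => ?_
      show Q k' a * P b k' = 0 ∨ (Q k' a * P b k').IsHomogeneous (e b - e a)
      rcases hQ2 k' a with h0 | ⟨hle1, hhom1⟩
      · left; rw [h0, zero_mul]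
      rcases hP2 b k' with h0 | ⟨hle2, hhom2⟩
      · left; rw [h0, mul_zero]
      right
      have := hhom1.mul hhom2
      rwa [(by omega : (e' k' - e a) + (e b - e' k') = e b - e a)] at this
    · left
      rw [Matrix.mul_apply]
      refine Finset.sum_eq_zero fun k' _ => ?_
      show Q k' a * P b k' = 0
      rcases hQ2 k' a with h0 | ⟨hle1, _⟩
      · rw [h0, zero_mul]
      rcases hP2 b k' with h0 | ⟨hle2, _⟩
      · rw [h0, mul_zero]
      omega
  have hPQs : ∀ a b, (Pm * Qm) a b = 0 ∨
      (e' a ≤ e' b ∧ ((Pm * Qm) a b).IsHomogeneous (e' b - e' a)) := by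
    intro a b
    by_cases hle : e' a ≤ e' b
    · right
      refine ⟨hle, ?_⟩
      rw [Matrix.mul_apply]
      refine isHomogeneous_sum' _ _ _ fun k _ => ?_
      show P k a * Q b k = 0 ∨ (P k a * Q b k).IsHomogeneous (e' b - e' a)
      rcases hP2 k a with h0 | ⟨hle1, hhom1⟩
      · left; rw [h0, zero_mul]
      rcases hQ2 b k with h0 | ⟨hle2, hhom2⟩
      · left; rw [h0, mul_zero]
      right
      have := hhom1.mul hhom2
      rwa [(by omega : (e k - e' a) + (e' b - e k) = e' b - e' a)] at this
    · left
      rw [Matrix.mul_apply]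
      refine Finset.sum_eq_zero fun k _ => ?_
      show P k a * Q b k = 0
      rcases hP2 k a with h0 | ⟨hle1, _⟩
      · rw [h0, zero_mul]
      rcases hQ2 b k with h0 | ⟨hle2, _⟩
      · rw [h0, mul_zero]
      omega
  have hUnitQP : IsUnit (Qm * Pm) := isUnit_of_graded _ e hQPs hQPcc
  have hUnitPQ : IsUnit (Pm * Qm) := isUnit_of_graded _ e' hPQs hPQcc
  -- cardinalities in each degree agree
  have hcard : ∀ j, Fintype.card {k // e k = j} = Fintype.card {k' // e' k' = j} := by
    intro j
    have hP0 : ∀ k' k, constantCoeff (P k k') ≠ 0 → e' k' = e k := by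
      intro k' k h
      rcases hP2 k k' with h0 | ⟨hle, hhom⟩
      · rw [h0] at h; simp at h
      rcases Nat.eq_or_lt_of_le (Nat.zero_le (e k - e' k')) with hz | hpos
      · omega
      · exfalso
        exact h (constantCoeff_eq_zero_of_isHomogeneous hhom (by omega))
    have hQ0 : ∀ k k', constantCoeff (Q k' k) ≠ 0 → e k = e' k' := by
      intro k k' h
      rcases hQ2 k' k with h0 | ⟨hle, hhom⟩
      · rw [h0] at h; simp at h
      rcases Nat.eq_or_lt_of_le (Nat.zero_le (e' k' - e k)) with hz | hpos
      · omega
      · exfalso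
        exact h (constantCoeff_eq_zero_of_isHomogeneous hhom (by omega))
    set Qr : Matrix {k // e k = j} {k' // e' k' = j} K :=
      fun a b => constantCoeff (Q b.1 a.1) with hQr
    set Pr : Matrix {k' // e' k' = j} {k // e k = j} K :=
      fun b a => constantCoeff (P a.1 b.1) with hPr
    have key1 : Qr * Pr = 1 := by
      ext a c
      rw [Matrix.mul_apply]
      have hfull : ∑ b : {k' // e' k' = j}, Qr a b * Pr b c
          = ∑ k' : κ', constantCoeff (Q k' a.1) * constantCoeff (P c.1 k') := by
        rw [← Finset.sum_subtype (Finset.univ.filter (fun k' => e' k' = j))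
          (by intro x; simp) (fun k' => constantCoeff (Q k' a.1) * constantCoeff (P c.1 k'))]
        rw [Finset.sum_filter]
        refine Finset.sum_congr rfl fun k' _ => ?_
        split_ifs with h
        · rfl
        · by_cases hq : constantCoeff (Q k' a.1) = 0
          · rw [hq, zero_mul]
          · exact absurd (a.2 ▸ hQ0 a.1 k' hq) (fun hh => h hh.symm)
      rw [hfull]
      have : ∑ k' : κ', constantCoeff (Q k' a.1) * constantCoeff (P c.1 k')
          = constantCoeff ((Qm * Pm) a.1 c.1) := by
        rw [Matrix.mul_apply, map_sum]
        exact Finset.sum_congr rfl fun k' _ => (map_mul constantCoeff _ _).symm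
      rw [this, hQPcc, Matrix.one_apply]
      simp [Subtype.ext_iff]
    have key2 : Pr * Qr = 1 := by
      ext a c
      rw [Matrix.mul_apply]
      have hfull : ∑ b : {k // e k = j}, Pr a b * Qr b c
          = ∑ k : κ, constantCoeff (P k a.1) * constantCoeff (Q c.1 k) := by
        rw [← Finset.sum_subtype (Finset.univ.filter (fun k => e k = j))
          (by intro x; simp) (fun k => constantCoeff (P k a.1) * constantCoeff (Q c.1 k))]
        rw [Finset.sum_filter]
        refine Finset.sum_congr rfl fun k _ => ?_
        split_ifs with h
        · rfl
        · by_cases hp : constantCoeff (P k a.1) = 0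
          · rw [hp, zero_mul]
          · exact absurd (a.2 ▸ hP0 a.1 k hp) (fun hh => h hh.symm)
      rw [hfull]
      have : ∑ k : κ, constantCoeff (P k a.1) * constantCoeff (Q c.1 k)
          = constantCoeff ((Pm * Qm) a.1 c.1) := by
        rw [Matrix.mul_apply, map_sum]
        exact Finset.sum_congr rfl fun k _ => (map_mul constantCoeff _ _).symm
      rw [this, hPQcc, Matrix.one_apply]
      simp [Subtype.ext_iff]
    exact card_eq_of_inverse Qr Pr key1 key2
  exact ⟨Pm, Qm, hP1, hQ1, fun k' k => hP2 k k', fun k k' => hQ2 k' k,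
    hUnitPQ, hUnitQP, hcard⟩

end Transition

section Syzygy

lemma degree_tsub {u v : σ →₀ ℕ} (h : v ≤ u) :
    (u - v).degree + v.degree = u.degree := by
  have hadd : (u - v) + v = u := tsub_add_cancel_of_le h
  rw [Finsupp.degree_eq_weight_one] at *
  rw [← map_add, hadd]

lemma degree_lt_of_lt {u v : σ →₀ ℕ} (h : u ≤ v) (hne : u ≠ v) :
    u.degree < v.degree := by
  have h1 := degree_tsub h
  have h2 : v - u ≠ 0 := by
    intro h0
    exact hne (le_antisymm h (tsub_eq_zero_iff_le.mp h0))
  have h3 : (v - u).degree ≠ 0 := fun h0 => h2 ((Finsupp.degree_eq_zero_iff _).mp h0)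
  omega

lemma monomial_one_ne_zero (u : σ →₀ ℕ) : (monomial u (1 : K)) ≠ 0 := by
  intro h
  have := congrArg (coeff u) h
  classical
  rw [coeff_monomial, if_pos rfl, coeff_zero] at this
  exact one_ne_zero this

lemma supp_le_of_syzygy {f g h : MvPolynomial σ K} {a b c : σ →₀ ℕ}
    (heq : f * monomial a 1 + g * monomial b 1 + h * monomial c 1 = 0)
    {ν : σ →₀ ℕ} (hν : ν ∈ f.support) : b ≤ ν + a ∨ c ≤ ν + a := by
  classical
  by_contra hc
  push_neg at hc
  have h0 := congrArg (coeff (ν + a)) heq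
  rw [coeff_add, coeff_add, coeff_zero, coeff_mul_monomial', coeff_mul_monomial',
    coeff_mul_monomial', if_pos le_add_self, if_neg hc.1, if_neg hc.2,
    add_tsub_cancel_right, mul_one, add_zero, add_zero] at h0
  rw [mem_support_iff] at hν
  exact hν h0

lemma eq_monomial_mul_of_supp {f : MvPolynomial σ K} {a : σ →₀ ℕ}
    (h : ∀ ν ∈ f.support, a ≤ ν) : f = monomial a 1 * (f.divMonomial a) := by
  classical
  ext u
  rw [coeff_monomial_mul']
  split_ifs with hu
  · rw [one_mul, coeff_divMonomial]
    congr 1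
    exact (add_tsub_cancel_of_le hu).symm
  · by_contra hne
    exact hu (h u (mem_support_iff.mpr hne))

variable (K) in
/-- First basic syzygy between `x^{m1}` and `x^{m3}`. -/
noncomputable def sigma1 (m1 m3 : σ →₀ ℕ) : Fin 3 → MvPolynomial σ K :=
  ![monomial ((m1 ⊔ m3) - m1) 1, 0, -(monomial ((m1 ⊔ m3) - m3) 1)]

variable (K) in
/-- Second basic syzygy between `x^{m2}` and `x^{m3}`. -/
noncomputable def sigma2 (m2 m3 : σ →₀ ℕ) : Fin 3 → MvPolynomial σ K :=
  ![0, monomial ((m2 ⊔ m3) - m2) 1, -(monomial ((m2 ⊔ m3) - m3) 1)]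

lemma sigma1_syz (m1 m2 m3 : σ →₀ ℕ) :
    sigma1 K m1 m3 0 * monomial m1 1 + sigma1 K m1 m3 1 * monomial m2 1
      + sigma1 K m1 m3 2 * monomial m3 1 = 0 := by
  simp only [sigma1, Matrix.cons_val_zero, Matrix.cons_val_one, Matrix.head_cons,
    Matrix.cons_val_two, Matrix.tail_cons, zero_mul, add_zero, neg_mul]
  rw [monomial_mul, monomial_mul, one_mul,
    tsub_add_cancel_of_le (le_sup_left : m1 ≤ m1 ⊔ m3),
    tsub_add_cancel_of_le (le_sup_right : m3 ≤ m1 ⊔ m3)]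
  ring

lemma sigma2_syz (m1 m2 m3 : σ →₀ ℕ) :
    sigma2 K m2 m3 0 * monomial m1 1 + sigma2 K m2 m3 1 * monomial m2 1
      + sigma2 K m2 m3 2 * monomial m3 1 = 0 := by
  simp only [sigma2, Matrix.cons_val_zero, Matrix.cons_val_one, Matrix.head_cons,
    Matrix.cons_val_two, Matrix.tail_cons, zero_mul, zero_add, neg_mul]
  rw [monomial_mul, monomial_mul, one_mul,
    tsub_add_cancel_of_le (le_sup_left : m2 ≤ m2 ⊔ m3),
    tsub_add_cancel_of_le (le_sup_right : m3 ≤ m2 ⊔ m3)]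
  ring

lemma sigma_indep (m1 m2 m3 : σ →₀ ℕ) (a b : MvPolynomial σ K)
    (h : a • sigma1 K m1 m3 + b • sigma2 K m2 m3 = 0) : a = 0 ∧ b = 0 := by
  constructor
  · have h0 := congrFun h 0
    simp only [sigma1, sigma2, Pi.add_apply, Pi.smul_apply, Matrix.cons_val_zero,
      smul_eq_mul, mul_zero, add_zero, Pi.zero_apply] at h0
    rcases mul_eq_zero.mp h0 with h' | h'
    · exact h'
    · exact absurd h' (monomial_one_ne_zero _)
  · have h0 := congrFun h 1
    simp only [sigma1, sigma2, Pi.add_apply, Pi.smul_apply, Matrix.cons_val_one,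
      Matrix.head_cons, Matrix.cons_val_zero, smul_eq_mul, mul_zero, zero_add, Pi.zero_apply] at h0
    rcases mul_eq_zero.mp h0 with h' | h'
    · exact h'
    · exact absurd h' (monomial_one_ne_zero _)

lemma syzygy_gen {m1 m2 m3 : σ →₀ ℕ} (hdvd : m3 ≤ m1 ⊔ m2)
    (v : Fin 3 → MvPolynomial σ K)
    (hker : v 0 * monomial m1 1 + v 1 * monomial m2 1 + v 2 * monomial m3 1 = 0) :
    ∃ h1 h2 : MvPolynomial σ K, v = h1 • sigma1 K m1 m3 + h2 • sigma2 K m2 m3 := by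
  have hd1 : ∀ ν ∈ (v 0).support, (m1 ⊔ m3) - m1 ≤ ν := by
    intro ν hν
    rcases supp_le_of_syzygy hker hν with h | h
    · exact tsub_le_iff_right.mpr
        (sup_le le_add_self (hdvd.trans (sup_le le_add_self h)))
    · exact tsub_le_iff_right.mpr (sup_le le_add_self h)
  have hker' : v 1 * monomial m2 1 + v 0 * monomial m1 1 + v 2 * monomial m3 1 = 0 := by
    rw [← hker]; ring
  have hd2 : ∀ ν ∈ (v 1).support, (m2 ⊔ m3) - m2 ≤ ν := by
    intro ν hν
    rcases supp_le_of_syzygy hker' hν with h | h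
    · exact tsub_le_iff_right.mpr
        (sup_le le_add_self (hdvd.trans (sup_le h le_add_self)))
    · exact tsub_le_iff_right.mpr (sup_le le_add_self h)
  set h1 := (v 0).divMonomial ((m1 ⊔ m3) - m1) with hh1
  set h2 := (v 1).divMonomial ((m2 ⊔ m3) - m2) with hh2
  have hv0 : v 0 = monomial ((m1 ⊔ m3) - m1) 1 * h1 := eq_monomial_mul_of_supp hd1
  have hv1 : v 1 = monomial ((m2 ⊔ m3) - m2) 1 * h2 := eq_monomial_mul_of_supp hd2
  refine ⟨h1, h2, ?_⟩
  have key : (v 2 + h1 * monomial ((m1 ⊔ m3) - m3) 1 + h2 * monomial ((m2 ⊔ m3) - m3) 1)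
      * monomial m3 1 = 0 := by
    have e1 : monomial ((m1 ⊔ m3) - m1) (1:K) * monomial m1 1
        = monomial ((m1 ⊔ m3) - m3) 1 * monomial m3 1 := by
      rw [monomial_mul, monomial_mul, one_mul,
        tsub_add_cancel_of_le (le_sup_left : m1 ≤ m1 ⊔ m3),
        tsub_add_cancel_of_le (le_sup_right : m3 ≤ m1 ⊔ m3)]
    have e2 : monomial ((m2 ⊔ m3) - m2) (1:K) * monomial m2 1
        = monomial ((m2 ⊔ m3) - m3) 1 * monomial m3 1 := by
      rw [monomial_mul, monomial_mul, one_mul,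
        tsub_add_cancel_of_le (le_sup_left : m2 ≤ m2 ⊔ m3),
        tsub_add_cancel_of_le (le_sup_right : m3 ≤ m2 ⊔ m3)]
    calc (v 2 + h1 * monomial ((m1 ⊔ m3) - m3) 1 + h2 * monomial ((m2 ⊔ m3) - m3) 1)
        * monomial m3 1
        = v 0 * monomial m1 1 + v 1 * monomial m2 1 + v 2 * monomial m3 1 := by
          rw [hv0, hv1]
          calc (v 2 + h1 * monomial ((m1 ⊔ m3) - m3) 1 + h2 * monomial ((m2 ⊔ m3) - m3) 1)
              * monomial m3 1
              = h1 * (monomial ((m1 ⊔ m3) - m3) 1 * monomial m3 1)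
                + h2 * (monomial ((m2 ⊔ m3) - m3) 1 * monomial m3 1)
                + v 2 * monomial m3 1 := by ring
            _ = h1 * (monomial ((m1 ⊔ m3) - m1) 1 * monomial m1 1)
                + h2 * (monomial ((m2 ⊔ m3) - m2) 1 * monomial m2 1)
                + v 2 * monomial m3 1 := by rw [e1, e2]
            _ = monomial ((m1 ⊔ m3) - m1) 1 * h1 * monomial m1 1
                + monomial ((m2 ⊔ m3) - m2) 1 * h2 * monomial m2 1
                + v 2 * monomial m3 1 := by ring
      _ = 0 := hker
  have hv2 : v 2 = - (h1 * monomial ((m1 ⊔ m3) - m3) 1) - h2 * monomial ((m2 ⊔ m3) - m3) 1 := by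
    rcases mul_eq_zero.mp key with h' | h'
    · linear_combination h'
    · exact absurd h' (monomial_one_ne_zero _)
  funext i
  fin_cases i
  · show v 0 = h1 * monomial ((m1 ⊔ m3) - m1) 1 + h2 * 0
    rw [hv0]; ring
  · show v 1 = h1 * 0 + h2 * monomial ((m2 ⊔ m3) - m2) 1
    rw [hv1]; ring
  · show v 2 = h1 * -(monomial ((m1 ⊔ m3) - m3) 1) + h2 * -(monomial ((m2 ⊔ m3) - m3) 1)
    rw [hv2]; ring

end Syzygy

section Glue

lemma constantCoeff_of_mem_range {α β : Type*} [Fintype β]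
    (M : Matrix α β (MvPolynomial σ K)) (hM : ∀ a b, constantCoeff (M a b) = 0)
    {f : α → MvPolynomial σ K} (hf : f ∈ LinearMap.range M.mulVecLin) (a : α) :
    constantCoeff (f a) = 0 := by
  obtain ⟨v, rfl⟩ := hf
  show constantCoeff (∑ b, M a b * v b) = 0
  rw [map_sum]
  exact Finset.sum_eq_zero fun b _ => by rw [map_mul, hM a b, zero_mul]

lemma isEmpty_of_surj {α β : Type*} [Fintype α] [Fintype β]
    (M : Matrix α β (MvPolynomial σ K)) (hM : ∀ a b, constantCoeff (M a b) = 0)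
    (hsurj : LinearMap.range M.mulVecLin = ⊤) : IsEmpty α := by
  by_contra h
  rw [not_isEmpty_iff] at h
  obtain ⟨a⟩ := h
  have hmem : (fun _ => 1 : α → MvPolynomial σ K) ∈ LinearMap.range M.mulVecLin := by
    rw [hsurj]; trivial
  have hc := constantCoeff_of_mem_range M hM hmem a
  simp at hc

lemma mu_minimal {m1 m2 m3 : σ →₀ ℕ}
    (h12 : ¬ m1 ≤ m2) (h21 : ¬ m2 ≤ m1) (h13 : ¬ m1 ≤ m3) (h31 : ¬ m3 ≤ m1)
    (h23 : ¬ m2 ≤ m3) (h32 : ¬ m3 ≤ m2)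
    {f1 f2 f3 : MvPolynomial σ K}
    (h : f1 * monomial m1 1 + f2 * monomial m2 1 + f3 * monomial m3 1 = 0) :
    constantCoeff f1 = 0 ∧ constantCoeff f2 = 0 ∧ constantCoeff f3 = 0 := by
  classical
  refine ⟨?_, ?_, ?_⟩
  · have h0 := congrArg (coeff m1) h
    rw [coeff_add, coeff_add, coeff_zero, coeff_mul_monomial', coeff_mul_monomial',
      coeff_mul_monomial', if_pos le_rfl, if_neg h21, if_neg h31, tsub_self, mul_one,
      add_zero, add_zero] at h0
    rwa [constantCoeff_eq]
  · have h0 := congrArg (coeff m2) h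
    rw [coeff_add, coeff_add, coeff_zero, coeff_mul_monomial', coeff_mul_monomial',
      coeff_mul_monomial', if_neg h12, if_pos le_rfl, if_neg h32, tsub_self, mul_one,
      zero_add, add_zero] at h0
    rwa [constantCoeff_eq]
  · have h0 := congrArg (coeff m3) h
    rw [coeff_add, coeff_add, coeff_zero, coeff_mul_monomial', coeff_mul_monomial',
      coeff_mul_monomial', if_neg h13, if_neg h23, if_pos le_rfl, tsub_self, mul_one,
      zero_add, zero_add] at h0
    rwa [constantCoeff_eq]

end Glue

lemma range_fin3 {α : Type*} (x y z : α) : Set.range ![x, y, z] = {x, y, z} := by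
  ext w
  simp only [Set.mem_insert_iff, Set.mem_singleton_iff]
  constructor
  · rintro ⟨a, rfl⟩
    fin_cases a
    · exact Or.inl rfl
    · exact Or.inr (Or.inl rfl)
    · exact Or.inr (Or.inr rfl)
  · rintro (rfl | rfl | rfl)
    exacts [⟨0, rfl⟩, ⟨1, rfl⟩, ⟨2, rfl⟩]

end RegAux

/-- A minimal graded free resolution of an ideal `I` in a polynomial ring:
ranks `rank i`, twists `deg i b` for the basis elements, homogeneous generators `gen`
mapping onto `I`, and differentials given by matrices with homogeneous entries lying
in the irrelevant maximal ideal (minimality), forming an exact complex. -/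
structure MinGradedFreeRes {K : Type*} [Field K] {σ : Type*}
    (I : Ideal (MvPolynomial σ K)) where
  rank : ℕ → ℕ
  deg : (i : ℕ) → Fin (rank i) → ℕ
  gen : Fin (rank 0) → MvPolynomial σ K
  genHom : ∀ b, (gen b).IsHomogeneous (deg 0 b)
  d : (i : ℕ) → Matrix (Fin (rank i)) (Fin (rank (i + 1))) (MvPolynomial σ K)
  dHom : ∀ i a b, d i a b = 0 ∨ (d i a b).IsHomogeneous (deg (i + 1) b - deg i a)
  dMinimal : ∀ i a b, MvPolynomial.coeff 0 (d i a b) = 0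
  aug_range : LinearMap.range (∑ b, (LinearMap.proj b).smulRight (gen b) :
      (Fin (rank 0) → MvPolynomial σ K) →ₗ[MvPolynomial σ K] MvPolynomial σ K) = I
  exact_aug : LinearMap.range (Matrix.mulVecLin (d 0)) =
      LinearMap.ker (∑ b, (LinearMap.proj b).smulRight (gen b) :
        (Fin (rank 0) → MvPolynomial σ K) →ₗ[MvPolynomial σ K] MvPolynomial σ K)
  exact : ∀ i, LinearMap.range (Matrix.mulVecLin (d (i + 1))) =
      LinearMap.ker (Matrix.mulVecLin (d i))

/-- The set of numbers `j - i` such that the graded Betti number `β_{i,j} ≠ 0`, read off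
from a minimal graded free resolution; the Castelnuovo–Mumford regularity of the ideal
is the greatest element of this set. -/
def MinGradedFreeRes.regSet {K : Type*} [Field K] {σ : Type*} {I : Ideal (MvPolynomial σ K)}
    (F : MinGradedFreeRes I) : Set ℤ :=
  {r : ℤ | ∃ (i : ℕ) (b : Fin (F.rank i)), r = (F.deg i b : ℤ) - (i : ℤ)}

/-- An ideal has `n`-linear resolution if it is zero or admits a minimal graded free
resolution whose `i`-th twists are all equal to `n + i`. -/
def HasLinearResolution {K : Type*} [Field K] {σ : Type*}
    (I : Ideal (MvPolynomial σ K)) (n : ℕ) : Prop :=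
  I = ⊥ ∨ ∃ F : MinGradedFreeRes I, ∀ (i : ℕ) (b : Fin (F.rank i)), F.deg i b = n + i


set_option maxHeartbeats 4000000 in
open RegAux in
/-- If `I` is minimally generated by three monomials `m1, m2, m3` with
`m3 ∣ lcm (m1, m2)`, then `reg I = max {deg lcm (m1, m3), deg lcm (m2, m3)} - 1`. -/
theorem reg_three_monomial_gens {K : Type*} [Field K] {σ : Type*} (m1 m2 m3 : σ →₀ ℕ)
    (h12 : ¬ m1 ≤ m2) (h21 : ¬ m2 ≤ m1) (h13 : ¬ m1 ≤ m3) (h31 : ¬ m3 ≤ m1)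
    (h23 : ¬ m2 ≤ m3) (h32 : ¬ m3 ≤ m2) (hdvd : m3 ≤ m1 ⊔ m2)
    (I : Ideal (MvPolynomial σ K))
    (hI : I = Ideal.span {monomial m1 (1 : K), monomial m2 (1 : K), monomial m3 (1 : K)}) :
    ∀ F : MinGradedFreeRes I,
      IsGreatest F.regSet
        (max (((m1 ⊔ m3).sum fun _ e => e : ℕ) : ℤ) (((m2 ⊔ m3).sum fun _ e => e : ℕ) : ℤ)
          - 1) := by
  classical
  intro F
  -- notation
  set d13 : ℕ := (m1 ⊔ m3).degree with hd13
  set d23 : ℕ := (m2 ⊔ m3).degree with hd23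
  have hsum13 : ((m1 ⊔ m3).sum fun _ e => e : ℕ) = d13 := rfl
  have hsum23 : ((m2 ⊔ m3).sum fun _ e => e : ℕ) = d23 := rfl
  set m : Fin 3 → (σ →₀ ℕ) := ![m1, m2, m3] with hm
  set μ : Fin 3 → MvPolynomial σ K := fun a => monomial (m a) 1 with hμ
  set mdeg : Fin 3 → ℕ := fun a => (m a).degree with hmdeg
  set augF : (Fin (F.rank 0) → MvPolynomial σ K) →ₗ[MvPolynomial σ K] MvPolynomial σ K :=
    (∑ b, (LinearMap.proj b).smulRight (F.gen b)) with haugF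
  have happF : ∀ v, augF v = ∑ b, v b * F.gen b := by
    intro v
    rw [haugF]
    simp [LinearMap.smulRight_apply, smul_eq_mul]
  set augμ : (Fin 3 → MvPolynomial σ K) →ₗ[MvPolynomial σ K] MvPolynomial σ K :=
    (∑ a, (LinearMap.proj a).smulRight (μ a)) with haugμ
  have happμ : ∀ v, augμ v = ∑ a, v a * μ a := by
    intro v
    rw [haugμ]
    simp [LinearMap.smulRight_apply, smul_eq_mul]
  have happμ3 : ∀ v : Fin 3 → MvPolynomial σ K,
      augμ v = v 0 * monomial m1 1 + v 1 * monomial m2 1 + v 2 * monomial m3 1 := by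
    intro v
    rw [happμ, Fin.sum_univ_three]
    rfl
  -- stage-0 families in ambient Fin 1 → R
  set gfam : Fin (F.rank 0) → (Fin 1 → MvPolynomial σ K) := fun b _ => F.gen b with hgfam
  set μfam : Fin 3 → (Fin 1 → MvPolynomial σ K) := fun a _ => μ a with hμfam
  set t0 : Fin 1 → ℕ := fun _ => 0 with ht0
  -- span equality at stage 0
  have hgenspan : Submodule.span (MvPolynomial σ K) (Set.range F.gen) = I := by
    have h1 : LinearMap.range augF = Submodule.span (MvPolynomial σ K) (Set.range F.gen) := by
      ext x
      rw [LinearMap.mem_range, Submodule.mem_span_range_iff_exists_fun]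
      constructor
      · rintro ⟨c, hc⟩; exact ⟨c, by rw [← hc, happF]; simp [smul_eq_mul]⟩
      · rintro ⟨c, hc⟩; exact ⟨c, by rw [happF]; simpa [smul_eq_mul] using hc⟩
    rw [← h1, haugF]
    exact F.aug_range
  have hμspan : Submodule.span (MvPolynomial σ K) (Set.range μ) = I := by
    rw [hI]
    have : Set.range μ = {monomial m1 (1:K), monomial m2 1, monomial m3 1} := by
      have h3 : μ = ![monomial m1 (1:K), monomial m2 1, monomial m3 1] := by
        funext a; fin_cases a <;> rfl
      rw [h3, range_fin3]
    rw [this]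
  set E : MvPolynomial σ K →ₗ[MvPolynomial σ K] (Fin 1 → MvPolynomial σ K) :=
    LinearMap.pi (fun _ => LinearMap.id) with hE
  have hspan0 : Submodule.span (MvPolynomial σ K) (Set.range gfam)
      = Submodule.span (MvPolynomial σ K) (Set.range μfam) := by
    have h1 : Set.range gfam = E '' Set.range F.gen := by
      rw [← Set.range_comp]; rfl
    have h2 : Set.range μfam = E '' Set.range μ := by
      rw [← Set.range_comp]; rfl
    rw [h1, h2, ← Submodule.map_span, ← Submodule.map_span, hgenspan, hμspan]
  -- homogeneity of stage-0 families
  have hVg : ∀ b, VHom t0 (F.deg 0 b) (gfam b) := by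
    intro b a
    right
    exact ⟨Nat.zero_le _, by simpa [hgfam, ht0] using F.genHom b⟩
  have hVμ : ∀ a, VHom t0 (mdeg a) (μfam a) := by
    intro a i
    right
    refine ⟨Nat.zero_le _, ?_⟩
    show (monomial (m a) (1:K)).IsHomogeneous (mdeg a - 0)
    rw [Nat.sub_zero]
    exact isHomogeneous_monomial _ rfl
  -- minimality of stage-0 families
  have hming : ∀ f : Fin (F.rank 0) → MvPolynomial σ K,
      ∑ b, f b • gfam b = 0 → ∀ b, constantCoeff (f b) = 0 := by
    intro f hf b
    have hf0 : augF f = 0 := by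
      rw [happF]
      have := congrFun hf 0
      simpa [smul_eq_mul] using this
    have hmem : f ∈ LinearMap.range (Matrix.mulVecLin (F.d 0)) := by
      rw [F.exact_aug]
      exact LinearMap.mem_ker.mpr hf0
    exact constantCoeff_of_mem_range (F.d 0)
      (fun a c => by rw [constantCoeff_eq]; exact F.dMinimal 0 a c) hmem b
  have hminμ : ∀ f : Fin 3 → MvPolynomial σ K,
      ∑ a, f a • μfam a = 0 → ∀ a, constantCoeff (f a) = 0 := by
    intro f hf a
    have hf0 : f 0 * monomial m1 1 + f 1 * monomial m2 1 + f 2 * monomial m3 1 = 0 := by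
      have := congrFun hf 0
      rw [Fin.sum_univ_three] at this
      simpa [smul_eq_mul, hμfam, hμ, hm] using this
    obtain ⟨c1, c2, c3⟩ := mu_minimal h12 h21 h13 h31 h23 h32 hf0
    fin_cases a
    · exact c1
    · exact c2
    · exact c3
  -- stage-0 transition
  obtain ⟨A, B, hA, hB, hAs, hBs, hUnitAB, hUnitBA, hcard0⟩ :=
    transition hVg hVμ hspan0 hming hminμ
  -- translate representations to polynomial level
  have hgen : ∀ b, ∑ a, A a b * μ a = F.gen b := by
    intro b
    have := congrFun (hA b) 0
    simpa [smul_eq_mul] using this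
  have hμrep : ∀ a, ∑ b, B b a * F.gen b = μ a := by
    intro a
    have := congrFun (hB a) 0
    simpa [smul_eq_mul] using this
  have hAaug : ∀ v, augμ (A.mulVec v) = augF v := by
    intro v
    rw [happμ, happF]
    calc ∑ a, (A.mulVec v) a * μ a
        = ∑ a, ∑ b, v b * (A a b * μ a) := by
          refine Finset.sum_congr rfl fun a _ => ?_
          show (∑ b, A a b * v b) * μ a = _
          rw [Finset.sum_mul]
          exact Finset.sum_congr rfl fun b _ => by ring
      _ = ∑ b, v b * ∑ a, A a b * μ a := by
          rw [Finset.sum_comm]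
          exact Finset.sum_congr rfl fun b _ => (Finset.mul_sum _ _ _).symm
      _ = ∑ b, v b * F.gen b := by simp only [hgen]
  have hBaug : ∀ u, augF (B.mulVec u) = augμ u := by
    intro u
    rw [happμ, happF]
    calc ∑ b, (B.mulVec u) b * F.gen b
        = ∑ b, ∑ a, u a * (B b a * F.gen b) := by
          refine Finset.sum_congr rfl fun b _ => ?_
          show (∑ a, B b a * u a) * F.gen b = _
          rw [Finset.sum_mul]
          exact Finset.sum_congr rfl fun a _ => by ring
      _ = ∑ a, u a * ∑ b, B b a * F.gen b := by
          rw [Finset.sum_comm]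
          exact Finset.sum_congr rfl fun a _ => (Finset.mul_sum _ _ _).symm
      _ = ∑ a, u a * μ a := by simp only [hμrep]
  -- stage-1: columns of d 0
  set cols : Fin (F.rank 1) → (Fin (F.rank 0) → MvPolynomial σ K) :=
    Matrix.transpose (F.d 0) with hcols
  have hcolspan : Submodule.span (MvPolynomial σ K) (Set.range cols)
      = LinearMap.ker augF := by
    rw [hcols, haugF, ← F.exact_aug, Matrix.range_mulVecLin]
    rfl
  have hVcols : ∀ c, VHom (F.deg 0) (F.deg 1 c) (cols c) := by
    intro c b
    rcases F.dHom 0 b c with h0 | hhom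
    · left; exact h0
    · by_cases hle : F.deg 0 b ≤ F.deg 1 c
      · right; exact ⟨hle, hhom⟩
      · left
        show F.d 0 b c = 0
        have hz : F.deg 1 c - F.deg 0 b = 0 := by omega
        rw [hz] at hhom
        have := eq_C_of_isHomogeneous_zero hhom
        rw [this, constantCoeff_eq, F.dMinimal 0 b c, map_zero]
  have hsum_cols : ∀ f : Fin (F.rank 1) → MvPolynomial σ K,
      ∑ c, f c • cols c = (F.d 0).mulVec f := by
    intro f
    funext b
    show (∑ c, f c • cols c) b = ∑ c, F.d 0 b c * f c
    rw [Finset.sum_apply]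
    exact Finset.sum_congr rfl fun c _ => by
      show f c * F.d 0 b c = F.d 0 b c * f c
      ring
  have hmincols : ∀ f : Fin (F.rank 1) → MvPolynomial σ K,
      ∑ c, f c • cols c = 0 → ∀ c, constantCoeff (f c) = 0 := by
    intro f hf c
    have hmem : f ∈ LinearMap.range (Matrix.mulVecLin (F.d 1)) := by
      rw [F.exact 0]
      refine LinearMap.mem_ker.mpr ?_
      show (F.d 0).mulVec f = 0
      rw [← hsum_cols, hf]
    exact constantCoeff_of_mem_range (F.d 1)
      (fun a c' => by rw [constantCoeff_eq]; exact F.dMinimal 1 a c') hmem c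
  -- the sigma family
  set σf : Fin 2 → (Fin 3 → MvPolynomial σ K) := ![sigma1 K m1 m3, sigma2 K m2 m3] with hσf
  set sdeg : Fin 2 → ℕ := ![d13, d23] with hsdeg
  have hm1le : m1 ≤ m1 ⊔ m3 := le_sup_left
  have hm3le : m3 ≤ m1 ⊔ m3 := le_sup_right
  have hm2le : m2 ≤ m2 ⊔ m3 := le_sup_left
  have hm3le' : m3 ≤ m2 ⊔ m3 := le_sup_right
  have hVσ : ∀ k, VHom mdeg (sdeg k) (σf k) := by
    intro k
    fin_cases k
    · intro a
      fin_cases a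
      · right
        have h1 := degree_tsub hm1le
        refine ⟨?_, ?_⟩
        · show m1.degree ≤ d13
          omega
        · show (monomial ((m1 ⊔ m3) - m1) (1:K)).IsHomogeneous (d13 - m1.degree)
          exact isHomogeneous_monomial _ (by omega)
      · left; rfl
      · right
        have h1 := degree_tsub hm3le
        refine ⟨?_, ?_⟩
        · show m3.degree ≤ d13
          omega
        · show (-(monomial ((m1 ⊔ m3) - m3) (1:K))).IsHomogeneous (d13 - m3.degree)
          rw [← map_neg]
          exact isHomogeneous_monomial _ (by omega)
    · intro a
      fin_cases a
      · left; rfl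
      · right
        have h1 := degree_tsub hm2le
        refine ⟨?_, ?_⟩
        · show m2.degree ≤ d23
          omega
        · show (monomial ((m2 ⊔ m3) - m2) (1:K)).IsHomogeneous (d23 - m2.degree)
          exact isHomogeneous_monomial _ (by omega)
      · right
        have h1 := degree_tsub hm3le'
        refine ⟨?_, ?_⟩
        · show m3.degree ≤ d23
          omega
        · show (-(monomial ((m2 ⊔ m3) - m3) (1:K))).IsHomogeneous (d23 - m3.degree)
          rw [← map_neg]
          exact isHomogeneous_monomial _ (by omega)
  have hminσ : ∀ f : Fin 2 → MvPolynomial σ K,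
      ∑ k, f k • σf k = 0 → ∀ k, constantCoeff (f k) = 0 := by
    intro f hf k
    rw [Fin.sum_univ_two] at hf
    obtain ⟨hz1, hz2⟩ := sigma_indep m1 m2 m3 (f 0) (f 1) hf
    fin_cases k
    · show constantCoeff (f 0) = 0
      rw [hz1, map_zero]
    · show constantCoeff (f 1) = 0
      rw [hz2, map_zero]
  have hσker : ∀ k, σf k ∈ LinearMap.ker augμ := by
    intro k
    fin_cases k
    · exact LinearMap.mem_ker.mpr ((happμ3 _).trans (sigma1_syz m1 m2 m3))
    · exact LinearMap.mem_ker.mpr ((happμ3 _).trans (sigma2_syz m1 m2 m3))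
  have hσspan : Submodule.span (MvPolynomial σ K) (Set.range σf)
      = LinearMap.ker augμ := by
    apply le_antisymm
    · rw [Submodule.span_le]
      rintro x ⟨k, rfl⟩
      exact hσker k
    · intro v hv
      have hv0 : v 0 * monomial m1 1 + v 1 * monomial m2 1 + v 2 * monomial m3 1 = 0 := by
        rw [← happμ3 v]
        exact LinearMap.mem_ker.mp hv
      obtain ⟨x1, x2, hx⟩ := syzygy_gen hdvd v hv0
      rw [hx]
      refine Submodule.add_mem _ ?_ ?_
      · exact Submodule.smul_mem _ _ (Submodule.subset_span ⟨0, rfl⟩)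
      · exact Submodule.smul_mem _ _ (Submodule.subset_span ⟨1, rfl⟩)
  -- pushforward of the columns
  set φcols : Fin (F.rank 1) → (Fin 3 → MvPolynomial σ K) :=
    fun c => A.mulVec (cols c) with hφcols
  have hmulVec_apply : ∀ (v : Fin (F.rank 0) → MvPolynomial σ K) a,
      (A.mulVec v) a = ∑ b, A a b * v b := fun v a => rfl
  have hVφ : ∀ c, VHom mdeg (F.deg 1 c) (φcols c) := by
    intro c a
    by_cases hle : mdeg a ≤ F.deg 1 c
    · right
      refine ⟨hle, ?_⟩
      show (∑ b, A a b * cols c b).IsHomogeneous (F.deg 1 c - mdeg a)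
      refine isHomogeneous_sum' _ _ _ fun b _ => ?_
      rcases hAs a b with h0 | ⟨hle1, hhom1⟩
      · left; rw [h0, zero_mul]
      rcases hVcols c b with h0 | ⟨hle2, hhom2⟩
      · left; rw [h0, mul_zero]
      right
      have := hhom1.mul hhom2
      rwa [(by omega : (F.deg 0 b - mdeg a) + (F.deg 1 c - F.deg 0 b)
        = F.deg 1 c - mdeg a)] at this
    · left
      show (∑ b, A a b * cols c b) = 0
      refine Finset.sum_eq_zero fun b _ => ?_
      rcases hAs a b with h0 | ⟨hle1, _⟩
      · rw [h0, zero_mul]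
      rcases hVcols c b with h0 | ⟨hle2, _⟩
      · rw [h0, mul_zero]
      omega
  -- inverses of the unit matrices
  obtain ⟨UAB, hUAB⟩ := hUnitAB
  obtain ⟨UBA, hUBA⟩ := hUnitBA
  set VAB : Matrix (Fin 3) (Fin 3) (MvPolynomial σ K) := ↑(UAB⁻¹) with hVABdef
  set WBA : Matrix (Fin (F.rank 0)) (Fin (F.rank 0)) (MvPolynomial σ K) := ↑(UBA⁻¹)
    with hWBAdef
  have hABV : (A * B) * VAB = 1 := by rw [hVABdef, ← hUAB]; exact UAB.mul_inv
  have hWBA : WBA * (B * A) = 1 := by rw [hWBAdef, ← hUBA]; exact UBA.inv_mul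
  have hAinj : ∀ x : Fin (F.rank 0) → MvPolynomial σ K, A.mulVec x = 0 → x = 0 := by
    intro x hx
    calc x = (1 : Matrix _ _ (MvPolynomial σ K)).mulVec x := (Matrix.one_mulVec x).symm
      _ = (WBA * (B * A)).mulVec x := by rw [hWBA]
      _ = WBA.mulVec ((B * A).mulVec x) := (Matrix.mulVec_mulVec x WBA (B * A)).symm
      _ = WBA.mulVec (B.mulVec (A.mulVec x)) :=
          congrArg WBA.mulVec (Matrix.mulVec_mulVec x B A).symm
      _ = 0 := by rw [hx, Matrix.mulVec_zero, Matrix.mulVec_zero]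
  have hφspan : Submodule.span (MvPolynomial σ K) (Set.range φcols)
      = LinearMap.ker augμ := by
    apply le_antisymm
    · rw [Submodule.span_le]
      rintro x ⟨c, rfl⟩
      refine LinearMap.mem_ker.mpr ?_
      rw [hφcols]
      show augμ (A.mulVec (cols c)) = 0
      rw [hAaug]
      have : cols c ∈ LinearMap.ker augF := by
        rw [← hcolspan]
        exact Submodule.subset_span ⟨c, rfl⟩
      exact LinearMap.mem_ker.mp this
    · intro v hv
      set v' : Fin (F.rank 0) → MvPolynomial σ K
        := B.mulVec (VAB.mulVec v) with hv'
      have hveq : A.mulVec v' = v := by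
        rw [hv', Matrix.mulVec_mulVec, Matrix.mulVec_mulVec, hABV, Matrix.one_mulVec]

      have hv'ker : v' ∈ LinearMap.ker augF := by
        refine LinearMap.mem_ker.mpr ?_
        rw [hv', hBaug]
        have heq1 : augμ ((A * B).mulVec (VAB.mulVec v)) = augμ (VAB.mulVec v) := by
          rw [← Matrix.mulVec_mulVec, hAaug, hBaug]
        rw [← heq1, Matrix.mulVec_mulVec, hABV, Matrix.one_mulVec]
        exact LinearMap.mem_ker.mp hv
      rw [← hcolspan] at hv'ker
      obtain ⟨f, hf⟩ := Submodule.mem_span_range_iff_exists_fun _ |>.1 hv'ker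
      have : v = ∑ c, f c • φcols c := by
        rw [← hveq, ← hf]
        funext a
        rw [hmulVec_apply]
        rw [Finset.sum_apply]
        have swap : ∀ b, A a b * (∑ c, f c • cols c) b = ∑ c, f c * (A a b * cols c b) := by
          intro b
          rw [Finset.sum_apply, Finset.mul_sum]
          exact Finset.sum_congr rfl fun c _ => by
            show A a b * (f c * cols c b) = f c * (A a b * cols c b)
            ring
        rw [Finset.sum_congr rfl fun b _ => swap b, Finset.sum_comm]
        refine Finset.sum_congr rfl fun c _ => ?_
        show ∑ b, f c * (A a b * cols c b) = (f c • φcols c) a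
        rw [← Finset.mul_sum]
        rfl
      rw [this]
      exact Submodule.sum_mem _ fun c _ =>
        Submodule.smul_mem _ _ (Submodule.subset_span ⟨c, rfl⟩)
  have hsumφ : ∀ f : Fin (F.rank 1) → MvPolynomial σ K,
      ∑ c, f c • φcols c = A.mulVec (∑ c, f c • cols c) := by
    intro f
    funext a
    rw [Finset.sum_apply, hmulVec_apply]
    have swap : ∀ b, A a b * (∑ c, f c • cols c) b = ∑ c, f c * (A a b * cols c b) := by
      intro b
      rw [Finset.sum_apply, Finset.mul_sum]
      exact Finset.sum_congr rfl fun c _ => by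
        show A a b * (f c * cols c b) = f c * (A a b * cols c b)
        ring
    rw [Finset.sum_congr rfl fun b _ => swap b, Finset.sum_comm]
    refine Finset.sum_congr rfl fun c _ => ?_
    show (f c • φcols c) a = ∑ b, f c * (A a b * cols c b)
    rw [← Finset.mul_sum]
    rfl
  have hminφ : ∀ f : Fin (F.rank 1) → MvPolynomial σ K,
      ∑ c, f c • φcols c = 0 → ∀ c, constantCoeff (f c) = 0 := by
    intro f hf c
    have hx : ∑ c, f c • cols c = 0 := by
      apply hAinj
      rw [← hsumφ, hf]
    exact hmincols f hx c
  -- stage-1 transition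
  obtain ⟨P1, Q1, hP1, hQ1, hP1s, hQ1s, hUnitPQ1, hUnitQP1, hcard1⟩ :=
    transition hVφ hVσ (hφspan.trans hσspan.symm) hminφ hminσ
  -- injectivity of d 0
  have hd0inj : ∀ f : Fin (F.rank 1) → MvPolynomial σ K,
      (F.d 0).mulVec f = 0 → f = 0 := by
    intro f hf
    have h1 : ∑ c, f c • cols c = 0 := by rw [hsum_cols, hf]
    have h2 : ∑ c, f c • φcols c = 0 := by rw [hsumφ, h1, Matrix.mulVec_zero]
    have h3 : ∑ k, (P1.mulVec f) k • σf k = 0 := by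
      have expand : ∑ k, (P1.mulVec f) k • σf k = ∑ c, f c • φcols c := by
        calc ∑ k, (P1.mulVec f) k • σf k
            = ∑ k, ∑ c, f c • (P1 k c • σf k) := by
              refine Finset.sum_congr rfl fun k _ => ?_
              show (∑ c, P1 k c * f c) • σf k = _
              rw [Finset.sum_smul]
              exact Finset.sum_congr rfl fun c _ => by
                rw [smul_smul, mul_comm]
          _ = ∑ c, f c • ∑ k, P1 k c • σf k := by
              rw [Finset.sum_comm]
              exact Finset.sum_congr rfl fun c _ => (Finset.smul_sum).symm
          _ = ∑ c, f c • φcols c := by simp only [hP1]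
      rw [expand, h2]
    rw [Fin.sum_univ_two] at h3
    obtain ⟨hz1, hz2⟩ := sigma_indep m1 m2 m3 _ _ h3
    have hPf : P1.mulVec f = 0 := by
      funext k
      fin_cases k
      · exact hz1
      · exact hz2
    obtain ⟨UQP, hUQP⟩ := hUnitQP1
    set WQP : Matrix (Fin (F.rank 1)) (Fin (F.rank 1)) (MvPolynomial σ K) := ↑(UQP⁻¹)
      with hWQPdef
    have hWQP : WQP * (Q1 * P1) = 1 := by rw [hWQPdef, ← hUQP]; exact UQP.inv_mul
    calc f = (1 : Matrix _ _ (MvPolynomial σ K)).mulVec f := (Matrix.one_mulVec f).symm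
      _ = (WQP * (Q1 * P1)).mulVec f := by rw [hWQP]
      _ = WQP.mulVec ((Q1 * P1).mulVec f) := (Matrix.mulVec_mulVec f WQP (Q1 * P1)).symm
      _ = WQP.mulVec (Q1.mulVec (P1.mulVec f)) :=
          congrArg WQP.mulVec (Matrix.mulVec_mulVec f Q1 P1).symm
      _ = 0 := by rw [hPf, Matrix.mulVec_zero, Matrix.mulVec_zero]
  -- all higher ranks vanish
  have hrank : ∀ n, F.rank (n + 2) = 0 := by
    have hker1top : LinearMap.ker (Matrix.mulVecLin (F.d 1)) = ⊤ := by
      rw [Submodule.eq_top_iff']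
      intro v
      refine LinearMap.mem_ker.mpr ?_
      have hv : Matrix.mulVecLin (F.d 1) v ∈ LinearMap.range (Matrix.mulVecLin (F.d 1)) :=
        LinearMap.mem_range_self _ v
      rw [F.exact 0] at hv
      have h0 : (F.d 0).mulVec (Matrix.mulVecLin (F.d 1) v) = 0 := LinearMap.mem_ker.mp hv
      exact hd0inj _ h0
    intro n
    induction n with
    | zero =>
      have hsurj : LinearMap.range (Matrix.mulVecLin (F.d 2)) = ⊤ := by
        rw [F.exact 1, hker1top]
      have := isEmpty_of_surj (F.d 2)
        (fun a b => by rw [constantCoeff_eq]; exact F.dMinimal 2 a b) hsurj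
      by_contra h
      exact (this.false (⟨0, Nat.pos_of_ne_zero h⟩ : Fin (F.rank 2))).elim
    | succ n ih =>
      have hkertop : LinearMap.ker (Matrix.mulVecLin (F.d (n + 2))) = ⊤ := by
        rw [Submodule.eq_top_iff']
        intro v
        refine LinearMap.mem_ker.mpr ?_
        funext a
        exact absurd a.isLt (by omega)
      have hsurj : LinearMap.range (Matrix.mulVecLin (F.d (n + 3))) = ⊤ := by
        rw [F.exact (n + 2), hkertop]
      have := isEmpty_of_surj (F.d (n + 3))
        (fun a b => by rw [constantCoeff_eq]; exact F.dMinimal (n + 3) a b) hsurj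
      by_contra h
      exact (this.false (⟨0, Nat.pos_of_ne_zero h⟩ : Fin (F.rank (n + 3)))).elim
  -- strict degree inequalities
  have hlt1 : m1.degree < d13 := by
    refine degree_lt_of_lt hm1le fun h => h31 ?_
    rw [h]; exact le_sup_right
  have hlt2 : m2.degree < d23 := by
    refine degree_lt_of_lt hm2le fun h => h32 ?_
    rw [h]; exact le_sup_right
  have hlt3 : m3.degree < d13 := by
    refine degree_lt_of_lt hm3le fun h => h13 ?_
    rw [h]; exact le_sup_left
  -- the target value
  rw [hsum13, hsum23]
  constructor
  · -- membership : some twist at stage 1 realizes the max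
    set j := max d13 d23 with hj
    have hne : Nonempty {k : Fin 2 // sdeg k = j} := by
      rcases le_total d23 d13 with h | h
      · exact ⟨⟨0, by show d13 = j; omega⟩⟩
      · exact ⟨⟨1, by show d23 = j; omega⟩⟩
    have hpos : 0 < Fintype.card {c : Fin (F.rank 1) // F.deg 1 c = j} := by
      rw [hcard1 j]
      exact Fintype.card_pos_iff.mpr hne
    obtain ⟨⟨c, hc⟩⟩ := Fintype.card_pos_iff.mp hpos
    refine ⟨1, c, ?_⟩
    rw [hc]
    have hcast : ((max d13 d23 : ℕ) : ℤ) = (d13 : ℤ) ⊔ (d23 : ℤ) := by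
      rcases le_total d23 d13 with h | h
      · rw [max_eq_left h, max_eq_left (by exact_mod_cast h : (d23:ℤ) ≤ d13)]
      · rw [max_eq_right h, max_eq_right (by exact_mod_cast h : (d13:ℤ) ≤ d23)]
    rw [hj, ← hcast]
    push_cast
    ring
  · -- upper bound
    rintro r ⟨i, b, rfl⟩
    match i with
    | 0 =>
      have hpos : 0 < Fintype.card {a : Fin 3 // mdeg a = F.deg 0 b} := by
        rw [← hcard0 (F.deg 0 b)]
        exact Fintype.card_pos_iff.mpr ⟨⟨b, rfl⟩⟩
      obtain ⟨⟨a, ha⟩⟩ := Fintype.card_pos_iff.mp hpos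
      have hbound : F.deg 0 b < max d13 d23 := by
        fin_cases a
        · have he : F.deg 0 b = m1.degree := by rw [← ha]; rfl
          rw [he]; exact lt_max_of_lt_left hlt1
        · have he : F.deg 0 b = m2.degree := by rw [← ha]; rfl
          rw [he]; exact lt_max_of_lt_right hlt2
        · have he : F.deg 0 b = m3.degree := by rw [← ha]; rfl
          rw [he]; exact lt_max_of_lt_left hlt3
      have hcast : ((max d13 d23 : ℕ) : ℤ) = (d13 : ℤ) ⊔ (d23 : ℤ) := by
        rcases le_total d23 d13 with h | h
        · rw [max_eq_left h, max_eq_left (by exact_mod_cast h : (d23:ℤ) ≤ d13)]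
        · rw [max_eq_right h, max_eq_right (by exact_mod_cast h : (d13:ℤ) ≤ d23)]
      rw [← hcast]
      push_cast
      omega
    | 1 =>
      have hpos : 0 < Fintype.card {k : Fin 2 // sdeg k = F.deg 1 b} := by
        rw [← hcard1 (F.deg 1 b)]
        exact Fintype.card_pos_iff.mpr ⟨⟨b, rfl⟩⟩
      obtain ⟨⟨k, hk⟩⟩ := Fintype.card_pos_iff.mp hpos
      have hbound : F.deg 1 b ≤ max d13 d23 := by
        fin_cases k
        · have he : F.deg 1 b = d13 := by rw [← hk]; rfl
          rw [he]; exact le_max_left _ _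
        · have he : F.deg 1 b = d23 := by rw [← hk]; rfl
          rw [he]; exact le_max_right _ _
      have hcast : ((max d13 d23 : ℕ) : ℤ) = (d13 : ℤ) ⊔ (d23 : ℤ) := by
        rcases le_total d23 d13 with h | h
        · rw [max_eq_left h, max_eq_left (by exact_mod_cast h : (d23:ℤ) ≤ d13)]
        · rw [max_eq_right h, max_eq_right (by exact_mod_cast h : (d13:ℤ) ≤ d23)]
      rw [← hcast]
      push_cast
      omega
    | (n + 2) =>
      exact absurd b.isLt (by have := hrank n; omega)
end

section
/- For n ≥ 5 and k ∈ [(n+1)/2, n−2], the graph L_{n,k} contains an induced subgraph isomorphic to L_{n, n−k+1}, where n − k + 1 ∈ [3, (n+1)/2]. Consequently, a graph G contains no L_{n,k} with k ∈ [3,(n+1)/2] as an induced subgraph if and only if it contains no L_{n,k} with k ∈ [3,n−2] as an induced subgraph. -/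
open MvPolynomial

/-- The `n`-path ideal of a graph `G`: the ideal generated by the products of the
vertices along each path on `n` vertices of `G`. -/
noncomputable def pathIdeal {V : Type*} (K : Type*) [Field K] (G : SimpleGraph V) (n : ℕ) :
    Ideal (MvPolynomial V K) :=
  Ideal.span {f | ∃ p : Fin n → V, Function.Injective p ∧
    (∀ i j : Fin n, (j : ℕ) = (i : ℕ) + 1 → G.Adj (p i) (p j)) ∧
    f = ∏ i, (X (p i) : MvPolynomial V K)}

/-- `G` contains a copy of `H` as an induced subgraph. -/
def ContainsInduced {V W : Type*} (G : SimpleGraph V) (H : SimpleGraph W) : Prop :=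
  Nonempty (H ↪g G)

/-- `P_n + P_n` : the disjoint union of two path graphs on `n` vertices each. -/
def twoPaths (n : ℕ) : SimpleGraph (Fin n ⊕ Fin n) :=
  SimpleGraph.pathGraph n ⊕g SimpleGraph.pathGraph n

/-- The tree `L_{n,m}`: a path `x_1, …, x_n` together with a path `y_1, …, y_{m-1}`
attached to `x_m` at its end `y_{m-1}`.  Vertex `i` for `i < n` is `x_{i+1}`, and
vertex `n + j` for `j < m - 1` is `y_{j+1}`. -/
def Lgraph (n m : ℕ) : SimpleGraph (Fin (n + (m - 1))) :=
  SimpleGraph.fromRel (fun a b =>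
    ((b : ℕ) = (a : ℕ) + 1 ∧ ((b : ℕ) ≤ n - 1 ∨ n ≤ (a : ℕ))) ∨
    ((a : ℕ) = n + m - 2 ∧ (b : ℕ) = m - 1))

/-- `d` is the length of a longest path in `G` (for a tree, its diameter). -/
def IsLongestPathLength {V : Type*} (G : SimpleGraph V) (d : ℕ) : Prop :=
  (∃ (u v : V) (p : G.Walk u v), p.IsPath ∧ p.length = d) ∧
    ∀ (u v : V) (p : G.Walk u v), p.IsPath → p.length ≤ d

set_option maxHeartbeats 1000000 in
lemma Lgraph_aux (n k : ℕ) (hn : 5 ≤ n) (hk1 : n + 1 ≤ 2 * k) (hk2 : k ≤ n - 2) :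
    ContainsInduced (Lgraph n k) (Lgraph n (n - k + 1)) := by
  refine ⟨⟨⟨fun v => ⟨if (v : ℕ) < n then n - 1 - (v : ℕ) else (v : ℕ) + (k - (n - k + 1)), ?_⟩,
      ?_⟩, ?_⟩⟩
  · have hv := v.isLt
    split <;> omega
  · intro a b hab
    have ha := a.isLt
    have hb := b.isLt
    have : (a : ℕ) = (b : ℕ) := by
      have := congrArg Fin.val hab
      simp only at this
      split at this <;> split at this <;> omega
    exact Fin.ext this
  · intro a b
    have ha := a.isLt
    have hb := b.isLt
    simp only [Function.Embedding.coeFn_mk, Lgraph, SimpleGraph.fromRel_adj, ne_eq,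
      Fin.mk.injEq, Fin.ext_iff]
    dsimp only [DFunLike.coe]
    split <;> split <;> omega

/-- For `n ≥ 5` and `(n+1)/2 ≤ k ≤ n-2`, `L_{n,k}` contains an induced copy of
`L_{n,n-k+1}` with `n - k + 1 ∈ [3, (n+1)/2]`; consequently, a graph `G` contains no
induced `L_{n,k}` with `k ∈ [3,(n+1)/2]` iff it contains no induced `L_{n,k}` with
`k ∈ [3, n-2]`. -/
theorem Lgraph_induced_reflection {V : Type*} (G : SimpleGraph V) (n k : ℕ)
    (hn : 5 ≤ n) (hk1 : n + 1 ≤ 2 * k) (hk2 : k ≤ n - 2) :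
    ContainsInduced (Lgraph n k) (Lgraph n (n - k + 1)) ∧
    (3 ≤ n - k + 1 ∧ 2 * (n - k + 1) ≤ n + 1) ∧
    ((∀ k' : ℕ, 3 ≤ k' → 2 * k' ≤ n + 1 → ¬ ContainsInduced G (Lgraph n k')) ↔
      (∀ k' : ℕ, 3 ≤ k' → k' ≤ n - 2 → ¬ ContainsInduced G (Lgraph n k'))) := by
  have h1 := Lgraph_aux n k hn hk1 hk2
  refine ⟨h1, ⟨by omega, by omega⟩, ?_⟩
  constructor
  · intro h k' h3 hk' hc
    by_cases hcase : 2 * k' ≤ n + 1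
    · exact h k' h3 hcase hc
    · have h2 := Lgraph_aux n k' hn (by omega) hk'
      obtain ⟨e⟩ := h2
      obtain ⟨e'⟩ := hc
      exact h (n - k' + 1) (by omega) (by omega) ⟨e'.comp e⟩
  · intro h k' h3 hk' hc
    exact h k' h3 (by omega) hc
end

section
/- Let n ≥ 4 and let G be a tree satisfying the (F_n) condition. Let v_1,…,v_{d+1} be a longest path of G (d = diam(G)), and let trim(G) be the induced subgraph of G on ∪_{i=1}^{d+1} N_G[v_i] (the closed neighborhoods of the path vertices). Then J_n(G) = J_n(trim(G)). -/
open MvPolynomial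

/-- The condition `(F_n)` on a tree `G` of diameter `d`: `d ∈ [n-1, 2n-1]` and `G`
contains no induced `P_n + P_n` and no induced forbidden tree (`L_{5,3}` when `n = 4`;
`L_{n,k}` for `k ∈ [3, n-2]` when `n ≥ 5`). -/
def SatisfiesF {V : Type*} (G : SimpleGraph V) (n d : ℕ) : Prop :=
  IsLongestPathLength G d ∧ n - 1 ≤ d ∧ d ≤ 2 * n - 1 ∧
    ¬ ContainsInduced G (twoPaths n) ∧
    (if n = 4 then ¬ ContainsInduced G (Lgraph 5 3)
     else ∀ k : ℕ, 3 ≤ k → k ≤ n - 2 → ¬ ContainsInduced G (Lgraph n k))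

/-- The restriction of `G` to a vertex set `S`: the induced subgraph on `S`, viewed as
a graph on the same vertex type. -/
def restrictTo {V : Type*} (G : SimpleGraph V) (S : Set V) : SimpleGraph V where
  Adj u v := G.Adj u v ∧ u ∈ S ∧ v ∈ S
  symm := ⟨fun u v h => ⟨h.1.symm, h.2.2, h.2.1⟩⟩
  loopless := ⟨fun v h => G.loopless.irrefl v h.1⟩


namespace TrimAux

open SimpleGraph

variable {V : Type*} {G : SimpleGraph V}

lemma getVert_mem_support {u v : V} (p : G.Walk u v) (i : ℕ) : p.getVert i ∈ p.support := by
  induction p generalizing i with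
  | nil => cases i <;> simp [SimpleGraph.Walk.getVert]
  | cons h q ih =>
    cases i with
    | zero => simp [SimpleGraph.Walk.getVert]
    | succ n =>
      rw [SimpleGraph.Walk.getVert_cons_succ]
      simp only [SimpleGraph.Walk.support_cons, List.mem_cons]
      exact Or.inr (ih n)

lemma getVert_injOn {u v : V} {p : G.Walk u v} (hp : p.IsPath) :
    ∀ i ≤ p.length, ∀ j ≤ p.length, p.getVert i = p.getVert j → i = j := by
  induction p with
  | nil => intro i hi j hj _; simp at hi hj; omega
  | cons h q ih =>
    rw [SimpleGraph.Walk.cons_isPath_iff] at hp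
    intro i hi j hj hij
    match i, j with
    | 0, 0 => rfl
    | 0, (j+1) =>
      exfalso
      rw [SimpleGraph.Walk.getVert_zero, SimpleGraph.Walk.getVert_cons_succ] at hij
      exact hp.2 (hij ▸ getVert_mem_support q j)
    | (i+1), 0 =>
      exfalso
      rw [SimpleGraph.Walk.getVert_zero, SimpleGraph.Walk.getVert_cons_succ] at hij
      exact hp.2 (hij ▸ getVert_mem_support q i)
    | (i+1), (j+1) =>
      rw [SimpleGraph.Walk.getVert_cons_succ, SimpleGraph.Walk.getVert_cons_succ] at hij
      simp only [SimpleGraph.Walk.length_cons] at hi hj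
      exact congrArg Nat.succ (ih hp.1 i (by omega) j (by omega) hij)

/-- A walk built from a chain of adjacent vertices. -/
def chainWalk (g : ℕ → V) : (N : ℕ) → (∀ i < N, G.Adj (g i) (g (i+1))) → G.Walk (g 0) (g N)
  | 0, _ => SimpleGraph.Walk.nil
  | (N+1), h => (chainWalk g N (fun i hi => h i (by omega))).concat (h N (by omega))

lemma chainWalk_length (g : ℕ → V) (N : ℕ) (h : ∀ i < N, G.Adj (g i) (g (i+1))) :
    (chainWalk (G := G) g N h).length = N := by
  induction N with
  | zero => rfl
  | succ N ih => simp [chainWalk, SimpleGraph.Walk.length_concat, ih]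

lemma chainWalk_support (g : ℕ → V) (N : ℕ) (h : ∀ i < N, G.Adj (g i) (g (i+1))) :
    (chainWalk (G := G) g N h).support = (List.range (N+1)).map g := by
  induction N with
  | zero => simp [chainWalk, List.range_succ]
  | succ N ih =>
    simp [chainWalk, SimpleGraph.Walk.support_concat, ih, List.range_succ]

lemma mem_chainWalk_support (g : ℕ → V) (N : ℕ) (h : ∀ i < N, G.Adj (g i) (g (i+1)))
    {x : V} : x ∈ (chainWalk (G := G) g N h).support ↔ ∃ t ≤ N, x = g t := by
  rw [chainWalk_support]
  simp only [List.mem_map, List.mem_range]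
  constructor
  · rintro ⟨t, ht, rfl⟩; exact ⟨t, by omega, rfl⟩
  · rintro ⟨t, ht, rfl⟩; exact ⟨t, by omega, rfl⟩

lemma chainWalk_isPath (g : ℕ → V) (N : ℕ) (h : ∀ i < N, G.Adj (g i) (g (i+1)))
    (hinj : ∀ i ≤ N, ∀ j ≤ N, g i = g j → i = j) :
    (chainWalk (G := G) g N h).IsPath := by
  rw [SimpleGraph.Walk.isPath_def, chainWalk_support]
  refine List.Nodup.map_on ?_ List.nodup_range
  intro i hi j hj hij
  exact hinj i (by simpa using Nat.lt_succ_iff.mp (List.mem_range.mp hi))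
    j (by simpa using Nat.lt_succ_iff.mp (List.mem_range.mp hj)) hij

/-- The closed neighbourhood of the path `v 0, …, v d`. -/
def NP (G : SimpleGraph V) (v : ℕ → V) (d : ℕ) : Set V :=
  {x | ∃ i ≤ d, x = v i ∨ G.Adj (v i) x}

section Tree

variable (hG : G.IsTree) {v : ℕ → V} {d : ℕ}
  (hvadj : ∀ i < d, G.Adj (v i) (v (i+1)))
  (hvinj : ∀ i ≤ d, ∀ j ≤ d, v i = v j → i = j)

include hG

lemma uniq {u w : V} {p q : G.Walk u w} (hp : p.IsPath) (hq : q.IsPath) : p = q :=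
  ((hG.existsUnique_path u w).unique hp hq)

omit hG

include hvadj hvinj

lemma exists_pathP {a c : ℕ} (hc : c ≤ d) (hac : a ≤ c) :
    ∃ w : G.Walk (v a) (v c), w.IsPath ∧ w.length = c - a ∧
      ∀ x ∈ w.support, ∃ i, a ≤ i ∧ i ≤ c ∧ x = v i := by
  have hadj : ∀ i < c - a, G.Adj ((fun t => v (a + t)) i) ((fun t => v (a + t)) (i+1)) := by
    intro i hi
    simp only
    have : a + (i + 1) = (a + i) + 1 := by omega
    rw [this]
    exact hvadj (a + i) (by omega)
  refine ⟨(chainWalk (G := G) (fun t => v (a + t)) (c - a) hadj).copy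
    (congrArg v (by omega)) (congrArg v (by omega)), ?_, ?_, ?_⟩
  · rw [SimpleGraph.Walk.isPath_copy]
    refine chainWalk_isPath _ _ _ ?_
    intro i hi j hj hij
    have := hvinj (a + i) (by omega) (a + j) (by omega) hij
    omega
  · rw [SimpleGraph.Walk.length_copy, chainWalk_length]
  · intro x hx
    rw [SimpleGraph.Walk.support_copy, mem_chainWalk_support] at hx
    obtain ⟨t, ht, rfl⟩ := hx
    exact ⟨a + t, by omega, by omega, rfl⟩

include hG

lemma path_between {a c : ℕ} (ha : a ≤ d) (hc : c ≤ d) {w : G.Walk (v a) (v c)}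
    (hw : w.IsPath) : w.length = max a c - min a c ∧
      ∀ x ∈ w.support, ∃ i, min a c ≤ i ∧ i ≤ max a c ∧ x = v i := by
  rcases le_total a c with hac | hac
  · obtain ⟨w', hw', hl, hs⟩ := exists_pathP hvadj hvinj hc hac
    obtain rfl := uniq hG hw hw'
    rw [max_eq_right hac, min_eq_left hac]
    exact ⟨hl, fun x hx => hs x hx⟩
  · obtain ⟨w', hw', hl, hs⟩ := exists_pathP hvadj hvinj ha hac
    have hrev : w.reverse = w' := uniq hG hw.reverse hw'
    rw [max_eq_left hac, min_eq_right hac]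
    constructor
    · have := congrArg SimpleGraph.Walk.length hrev
      rw [SimpleGraph.Walk.length_reverse] at this
      omega
    · intro x hx
      have : x ∈ w.reverse.support := by rwa [SimpleGraph.Walk.support_reverse, List.mem_reverse]
      exact hs x (hrev ▸ this)

/-- The long path is induced. -/
lemma P_induced {a c : ℕ} (ha : a ≤ d) (hc : c ≤ d) (hadj : G.Adj (v a) (v c)) :
    c = a + 1 ∨ a = c + 1 := by
  by_contra hcon
  push_neg at hcon
  have hne : a ≠ c := by
    rintro rfl
    exact G.irrefl hadj
  have hpath : (SimpleGraph.Walk.cons hadj SimpleGraph.Walk.nil).IsPath := by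
    refine SimpleGraph.Walk.IsPath.nil.cons ?_
    simp only [SimpleGraph.Walk.support_nil, List.mem_singleton]
    exact fun h => hne (hvinj a ha c hc h)
  have := (path_between hG hvadj hvinj ha hc hpath).1
  simp only [SimpleGraph.Walk.length_cons, SimpleGraph.Walk.length_nil] at this
  omega

/-- A vertex outside the path adjacent to two path vertices: impossible. -/
lemma attach_unique {x : V} (hx : ∀ i ≤ d, x ≠ v i) {a c : ℕ} (ha : a ≤ d) (hc : c ≤ d)
    (h1 : G.Adj (v a) x) (h2 : G.Adj (v c) x) : a = c := by
  by_contra hne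
  have hvne : v a ≠ v c := fun h => hne (hvinj a ha c hc h)
  have hp1 : (SimpleGraph.Walk.cons h2.symm SimpleGraph.Walk.nil : G.Walk x (v c)).IsPath := by
    refine SimpleGraph.Walk.IsPath.nil.cons ?_
    simp only [SimpleGraph.Walk.support_nil, List.mem_singleton]
    exact hx c hc
  have hpath : (SimpleGraph.Walk.cons h1 (SimpleGraph.Walk.cons h2.symm
      SimpleGraph.Walk.nil)).IsPath := by
    refine hp1.cons ?_
    simp only [SimpleGraph.Walk.support_cons, SimpleGraph.Walk.support_nil, List.mem_cons,
      List.mem_singleton, List.not_mem_nil, or_false]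
    push_neg
    exact ⟨fun h => hx a ha h.symm, hvne⟩
  obtain ⟨-, hsupp⟩ := path_between hG hvadj hvinj ha hc hpath
  obtain ⟨i, -, hi2, hxi⟩ := hsupp x (by simp)
  exact hx i (by omega) hxi

/-- Two adjacent vertices outside the path, both attached to the path: impossible. -/
lemma no_H1 {x y : V} (hx : ∀ i ≤ d, x ≠ v i) (hy : ∀ i ≤ d, y ≠ v i) (hxy : G.Adj x y)
    {a c : ℕ} (ha : a ≤ d) (hc : c ≤ d) (h1 : G.Adj (v a) x) (h2 : G.Adj (v c) y) :
    False := by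
  rcases eq_or_ne a c with rfl | hne
  · -- two x-y paths of different lengths
    have hp1 : (SimpleGraph.Walk.cons hxy SimpleGraph.Walk.nil).IsPath := by
      simp [SimpleGraph.Walk.isPath_def, hxy.ne]
    have hp2a : (SimpleGraph.Walk.cons h2 SimpleGraph.Walk.nil : G.Walk (v a) y).IsPath := by
      refine SimpleGraph.Walk.IsPath.nil.cons ?_
      simp only [SimpleGraph.Walk.support_nil, List.mem_singleton]
      exact fun h => hy a ha h.symm
    have hp2 : (SimpleGraph.Walk.cons h1.symm (SimpleGraph.Walk.cons h2
        SimpleGraph.Walk.nil)).IsPath := by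
      refine hp2a.cons ?_
      simp only [SimpleGraph.Walk.support_cons, SimpleGraph.Walk.support_nil, List.mem_cons,
        List.mem_singleton, List.not_mem_nil, or_false]
      push_neg
      exact ⟨fun h => hx a ha h, hxy.ne⟩
    have := congrArg SimpleGraph.Walk.length (uniq hG hp1 hp2)
    simp at this
  · have hvne : v a ≠ v c := fun h => hne (hvinj a ha c hc h)
    have hpa : (SimpleGraph.Walk.cons h2.symm SimpleGraph.Walk.nil : G.Walk y (v c)).IsPath := by
      refine SimpleGraph.Walk.IsPath.nil.cons ?_
      simp only [SimpleGraph.Walk.support_nil, List.mem_singleton]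
      exact hy c hc
    have hpb : (SimpleGraph.Walk.cons hxy (SimpleGraph.Walk.cons h2.symm
        SimpleGraph.Walk.nil) : G.Walk x (v c)).IsPath := by
      refine hpa.cons ?_
      simp only [SimpleGraph.Walk.support_cons, SimpleGraph.Walk.support_nil, List.mem_cons,
        List.mem_singleton, List.not_mem_nil, or_false]
      push_neg
      exact ⟨hxy.ne, hx c hc⟩
    have hpath : (SimpleGraph.Walk.cons h1 (SimpleGraph.Walk.cons hxy
        (SimpleGraph.Walk.cons h2.symm SimpleGraph.Walk.nil))).IsPath := by
      refine hpb.cons ?_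
      simp only [SimpleGraph.Walk.support_cons, SimpleGraph.Walk.support_nil, List.mem_cons,
        List.mem_singleton, List.not_mem_nil, or_false]
      push_neg
      exact ⟨fun h => hx a ha h.symm, fun h => hy a ha h.symm, hvne⟩
    obtain ⟨-, hsupp⟩ := path_between hG hvadj hvinj ha hc hpath
    obtain ⟨i, -, hi2, hxi⟩ := hsupp x (by simp)
    exact hx i (by omega) hxi

end Tree

end TrimAux

namespace TrimAux

open SimpleGraph

variable {V : Type*} {G : SimpleGraph V}

section Tree2

variable (hG : G.IsTree) {v : ℕ → V} {d : ℕ}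
  (hvadj : ∀ i < d, G.Adj (v i) (v (i+1)))
  (hvinj : ∀ i ≤ d, ∀ j ≤ d, v i = v j → i = j)

lemma v_mem_NP {i : ℕ} (hi : i ≤ d) : v i ∈ NP G v d := ⟨i, hi, Or.inl rfl⟩

lemma mem_NP_of_adj {i : ℕ} (hi : i ≤ d) {x : V} (h : G.Adj (v i) x) : x ∈ NP G v d :=
  ⟨i, hi, Or.inr h⟩

include hG hvadj hvinj

lemma gap {q : ℕ → V} {n : ℕ}
    (hqadj : ∀ j, j + 1 < n → G.Adj (q j) (q (j+1)))
    (hqinj : ∀ i, i < n → ∀ j, j < n → q i = q j → i = j)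
    {i k : ℕ} (hik : i + 2 ≤ k) (hk : k < n)
    (hqi : q i ∈ NP G v d) (hqk : q k ∈ NP G v d) (hmid : q (i+1) ∉ NP G v d) : False := by
  classical
  obtain ⟨a, ha, hia⟩ := hqi
  obtain ⟨c, hc, hkc⟩ := hqk
  have hqiNP : q i ∈ NP G v d := by
    rcases hia with h | h
    · exact h ▸ v_mem_NP ha
    · exact mem_NP_of_adj ha h
  have hqkNP : q k ∈ NP G v d := by
    rcases hkc with h | h
    · exact h ▸ v_mem_NP hc
    · exact mem_NP_of_adj hc h
  obtain ⟨w1, h1supp⟩ : ∃ w : G.Walk (q i) (v a), ∀ x ∈ w.support, x ∈ NP G v d := by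
    rcases hia with h | h
    · refine ⟨SimpleGraph.Walk.nil.copy rfl h, ?_⟩
      intro x hx
      rw [SimpleGraph.Walk.support_copy, SimpleGraph.Walk.support_nil] at hx
      simp only [List.mem_singleton] at hx
      exact hx ▸ hqiNP
    · refine ⟨SimpleGraph.Walk.cons h.symm SimpleGraph.Walk.nil, ?_⟩
      intro x hx
      simp only [SimpleGraph.Walk.support_cons, SimpleGraph.Walk.support_nil,
        List.mem_cons, List.mem_singleton, List.not_mem_nil, or_false] at hx
      rcases hx with rfl | rfl
      exacts [hqiNP, v_mem_NP ha]
  obtain ⟨w2, h2supp⟩ : ∃ w : G.Walk (v c) (q k), ∀ x ∈ w.support, x ∈ NP G v d := by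
    rcases hkc with h | h
    · refine ⟨SimpleGraph.Walk.nil.copy rfl h.symm, ?_⟩
      intro x hx
      rw [SimpleGraph.Walk.support_copy, SimpleGraph.Walk.support_nil] at hx
      simp only [List.mem_singleton] at hx
      exact hx ▸ v_mem_NP hc
    · refine ⟨SimpleGraph.Walk.cons h SimpleGraph.Walk.nil, ?_⟩
      intro x hx
      simp only [SimpleGraph.Walk.support_cons, SimpleGraph.Walk.support_nil,
        List.mem_cons, List.mem_singleton, List.not_mem_nil, or_false] at hx
      rcases hx with rfl | rfl
      exacts [v_mem_NP hc, hqkNP]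
  obtain ⟨w3, h3supp⟩ : ∃ w : G.Walk (v a) (v c), ∀ x ∈ w.support, x ∈ NP G v d := by
    rcases le_total a c with hac | hac
    · obtain ⟨w, -, -, hs⟩ := exists_pathP hvadj hvinj hc hac
      refine ⟨w, fun x hx => ?_⟩
      obtain ⟨j, -, hj2, rfl⟩ := hs x hx
      exact v_mem_NP (by omega)
    · obtain ⟨w, -, -, hs⟩ := exists_pathP hvadj hvinj ha hac
      refine ⟨w.reverse, fun x hx => ?_⟩
      rw [SimpleGraph.Walk.support_reverse, List.mem_reverse] at hx
      obtain ⟨j, -, hj2, rfl⟩ := hs x hx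
      exact v_mem_NP (by omega)
  set w := w1.append (w3.append w2) with hw
  have hwsupp : ∀ x ∈ w.support, x ∈ NP G v d := by
    intro x hx
    rw [SimpleGraph.Walk.mem_support_append_iff] at hx
    rcases hx with hx | hx
    · exact h1supp x hx
    · rw [SimpleGraph.Walk.mem_support_append_iff] at hx
      rcases hx with hx | hx
      · exact h3supp x hx
      · exact h2supp x hx
  -- the segment of q from i to k
  have hadj' : ∀ t < k - i, G.Adj ((fun t => q (i + t)) t) ((fun t => q (i + t)) (t+1)) := by
    intro t ht
    simp only
    have : i + (t + 1) = (i + t) + 1 := by omega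
    rw [this]
    exact hqadj (i + t) (by omega)
  set qseg := (chainWalk (G := G) (fun t => q (i + t)) (k - i) hadj').copy
    (congrArg q (Nat.add_zero i)) (congrArg q (show i + (k - i) = k by omega)) with hqseg
  have hqsegPath : qseg.IsPath := by
    rw [hqseg, SimpleGraph.Walk.isPath_copy]
    refine chainWalk_isPath _ _ _ ?_
    intro s hs t ht hst
    have := hqinj (i + s) (by omega) (i + t) (by omega) hst
    omega
  have heq : qseg = w.bypass := uniq hG hqsegPath w.bypass_isPath
  have hmem : q (i+1) ∈ qseg.support := by
    rw [hqseg, SimpleGraph.Walk.support_copy, mem_chainWalk_support]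
    exact ⟨1, by omega, rfl⟩
  rw [heq] at hmem
  exact hmid (hwsupp _ (SimpleGraph.Walk.support_bypass_subset _ hmem))

end Tree2

end TrimAux

namespace TrimAux

open SimpleGraph

variable {V : Type*} {G : SimpleGraph V}

section Tree3

variable (hG : G.IsTree) {v : ℕ → V} {d : ℕ}
  (hvadj : ∀ i < d, G.Adj (v i) (v (i+1)))
  (hvinj : ∀ i ≤ d, ∀ j ≤ d, v i = v j → i = j)

/-- Any injective chain in a tree is an induced path. -/
lemma chain_induced (hG : G.IsTree) {g : ℕ → V} {N : ℕ}
    (hadj : ∀ i < N, G.Adj (g i) (g (i+1)))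
    (hinj : ∀ i ≤ N, ∀ j ≤ N, g i = g j → i = j) :
    ∀ i ≤ N, ∀ j ≤ N, G.Adj (g i) (g j) → (j = i + 1 ∨ i = j + 1) := by
  have key : ∀ i ≤ N, ∀ j ≤ N, i ≤ j → G.Adj (g i) (g j) → (j = i + 1 ∨ i = j + 1) := by
    intro i hi j hj hij hadj'
    rcases eq_or_lt_of_le hij with rfl | hlt
    · exact absurd hadj' (G.irrefl)
    rcases eq_or_lt_of_le (Nat.succ_le_of_lt hlt) with h | hlt2
    · exact Or.inl h.symm
    · exfalso
      -- segment from g i to g j of length ≥ 2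
      have hadj'' : ∀ t < j - i, G.Adj ((fun t => g (i + t)) t) ((fun t => g (i + t)) (t+1)) := by
        intro t ht
        simp only
        have : i + (t + 1) = (i + t) + 1 := by omega
        rw [this]
        exact hadj (i + t) (by omega)
      have hseg : ((chainWalk (G := G) (fun t => g (i + t)) (j - i) hadj'').copy
          (congrArg g (Nat.add_zero i)) (congrArg g (show i + (j - i) = j by omega))).IsPath := by
        rw [SimpleGraph.Walk.isPath_copy]
        refine chainWalk_isPath _ _ _ ?_
        intro s hs t ht hst
        have := hinj (i + s) (by omega) (i + t) (by omega) hst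
        omega
      have hedge : (SimpleGraph.Walk.cons hadj' SimpleGraph.Walk.nil).IsPath := by
        refine SimpleGraph.Walk.IsPath.nil.cons ?_
        simp only [SimpleGraph.Walk.support_nil, List.mem_singleton]
        intro h
        have := hinj i hi j hj h
        omega
      have := congrArg SimpleGraph.Walk.length (uniq hG hedge hseg)
      simp only [SimpleGraph.Walk.length_cons, SimpleGraph.Walk.length_nil,
        SimpleGraph.Walk.length_copy] at this
      rw [chainWalk_length] at this
      omega
  intro i hi j hj hadj'
  rcases le_total i j with h | h
  · exact key i hi j hj h hadj'
  · rcases key j hj i hi h hadj'.symm with h' | h'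
    · exact Or.inr h'
    · exact Or.inl h'

/-- Gluing two chains with a connecting edge gives a path, bounding lengths. -/
lemma glue_le {n : ℕ} (hlong : ∀ (u w : V) (p : G.Walk u w), p.IsPath → p.length ≤ d)
    {x y : ℕ → V} {A B : ℕ}
    (hxadj : ∀ i < A, G.Adj (x i) (x (i+1)))
    (hyadj : ∀ j < B, G.Adj (y j) (y (j+1)))
    (hxy : G.Adj (x A) (y 0))
    (hxinj : ∀ i ≤ A, ∀ j ≤ A, x i = x j → i = j)
    (hyinj : ∀ i ≤ B, ∀ j ≤ B, y i = y j → i = j)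
    (hdisj : ∀ i ≤ A, ∀ j ≤ B, x i ≠ y j) :
    A + 1 + B ≤ d := by
  set g : ℕ → V := fun t => if t ≤ A then x t else y (t - A - 1) with hg
  have hgx : ∀ t ≤ A, g t = x t := fun t ht => by simp [hg, ht]
  have hgy : ∀ t, A < t → g t = y (t - A - 1) := fun t ht => by
    simp [hg, Nat.not_le.mpr ht]
  have hadj : ∀ t < A + 1 + B, G.Adj (g t) (g (t+1)) := by
    intro t ht
    rcases lt_trichotomy t A with h | rfl | h
    · rw [hgx t (by omega), hgx (t+1) (by omega)]
      exact hxadj t h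
    · rw [hgx t le_rfl, hgy (t+1) (by omega)]
      have : t + 1 - t - 1 = 0 := by omega
      rw [this]
      exact hxy
    · rw [hgy t h, hgy (t+1) (by omega)]
      have h1 : t + 1 - A - 1 = (t - A - 1) + 1 := by omega
      rw [h1]
      exact hyadj (t - A - 1) (by omega)
  have hinj : ∀ i ≤ A + 1 + B, ∀ j ≤ A + 1 + B, g i = g j → i = j := by
    intro i hi j hj hij
    rcases le_or_gt i A with h1 | h1 <;> rcases le_or_gt j A with h2 | h2
    · rw [hgx i h1, hgx j h2] at hij
      exact hxinj i h1 j h2 hij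
    · rw [hgx i h1, hgy j h2] at hij
      exact absurd hij (hdisj i h1 (j - A - 1) (by omega))
    · rw [hgy i h1, hgx j h2] at hij
      exact absurd hij.symm (hdisj j h2 (i - A - 1) (by omega))
    · rw [hgy i h1, hgy j h2] at hij
      have := hyinj (i - A - 1) (by omega) (j - A - 1) (by omega) hij
      omega
  have hpath := chainWalk_isPath (G := G) g (A + 1 + B) hadj hinj
  have := hlong _ _ _ hpath
  rwa [chainWalk_length] at this

end Tree3

end TrimAux

namespace TrimAux

open SimpleGraph

variable {V : Type*} {G : SimpleGraph V}

lemma embL {N k : ℕ} (hk3 : 3 ≤ k) (hkN : k ≤ N - 2) (x y : ℕ → V)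
    (hxadj : ∀ i, i + 1 < N → G.Adj (x i) (x (i+1)))
    (hxind : ∀ i, i < N → ∀ j, j < N → G.Adj (x i) (x j) → (j = i+1 ∨ i = j+1))
    (hxinj : ∀ i, i < N → ∀ j, j < N → x i = x j → i = j)
    (hyadj : ∀ j, j + 1 < k - 1 → G.Adj (y j) (y (j+1)))
    (hyind : ∀ i, i < k - 1 → ∀ j, j < k - 1 → G.Adj (y i) (y j) → (j = i+1 ∨ i = j+1))
    (hyinj : ∀ i, i < k - 1 → ∀ j, j < k - 1 → y i = y j → i = j)
    (hxyadj : G.Adj (x (k-1)) (y 0))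
    (hxynot : ∀ i, i < N → ∀ j, j < k - 1 → G.Adj (x i) (y j) → (i = k - 1 ∧ j = 0))
    (hne : ∀ i, i < N → ∀ j, j < k - 1 → x i ≠ y j) :
    ContainsInduced G (Lgraph N k) := by
  have hN : 5 ≤ N := by omega
  set φ : Fin (N + (k - 1)) → V := fun a =>
    if h : (a : ℕ) < N then x a else y (N + k - 2 - (a : ℕ)) with hφ
  have hφlt : ∀ a : Fin (N + (k-1)), (a : ℕ) < N → φ a = x a := by
    intro a h; simp [hφ, h]
  have hφge : ∀ a : Fin (N + (k-1)), N ≤ (a : ℕ) → φ a = y (N + k - 2 - (a : ℕ)) ∧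
      N + k - 2 - (a : ℕ) < k - 1 := by
    intro a h
    have := a.isLt
    constructor
    · simp [hφ, Nat.not_lt.mpr h]
    · omega
  refine ⟨⟨⟨φ, ?_⟩, ?_⟩⟩
  · intro a b hab
    have ha := a.isLt; have hb := b.isLt
    by_cases h1 : (a : ℕ) < N <;> by_cases h2 : (b : ℕ) < N
    · rw [hφlt a h1, hφlt b h2] at hab
      exact Fin.ext (hxinj _ h1 _ h2 hab)
    · rw [hφlt a h1, (hφge b (by omega)).1] at hab
      exact absurd hab (hne _ h1 _ (hφge b (by omega)).2)
    · rw [(hφge a (by omega)).1, hφlt b h2] at hab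
      exact absurd hab.symm (hne _ h2 _ (hφge a (by omega)).2)
    · rw [(hφge a (by omega)).1, (hφge b (by omega)).1] at hab
      have := hyinj _ (hφge a (by omega)).2 _ (hφge b (by omega)).2 hab
      exact Fin.ext (by omega)
  · intro a b
    have ha := a.isLt; have hb := b.isLt
    change G.Adj (φ a) (φ b) ↔ _
    simp only [RelEmbedding.coe_mk, Function.Embedding.coeFn_mk, Lgraph, fromRel_adj, ne_eq, Fin.ext_iff]
    by_cases h1 : (a : ℕ) < N <;> by_cases h2 : (b : ℕ) < N
    · rw [hφlt a h1, hφlt b h2]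
      constructor
      · intro h
        rcases hxind _ h1 _ h2 h with h' | h'
        · exact ⟨by omega, Or.inl (Or.inl ⟨h', by omega⟩)⟩
        · exact ⟨by omega, Or.inr (Or.inl ⟨h', by omega⟩)⟩
      · rintro ⟨hne', (⟨hs, _⟩ | ⟨hs, _⟩) | (⟨hs, _⟩ | ⟨hs, _⟩)⟩
        · exact hs ▸ hxadj _ (by omega)
        · omega
        · exact (hs ▸ hxadj _ (by omega)).symm
        · omega
    · rw [hφlt a h1, (hφge b (by omega)).1]
      constructor
      · intro h
        have := hxynot _ h1 _ (hφge b (by omega)).2 h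
        exact ⟨by omega, Or.inr (Or.inr ⟨by omega, by omega⟩)⟩
      · rintro ⟨hne', (⟨hs, hc⟩ | ⟨hs, hc⟩) | (⟨hs, hc⟩ | ⟨hs, hc⟩)⟩
        · omega
        · omega
        · omega
        · -- b = N + k - 2, a = k - 1
          have hb0 : N + k - 2 - (b : ℕ) = 0 := by omega
          have ha0 : (a : ℕ) = k - 1 := by omega
          rw [hb0, ha0]; exact hxyadj
    · rw [(hφge a (by omega)).1, hφlt b h2]
      constructor
      · intro h
        have := hxynot _ h2 _ (hφge a (by omega)).2 h.symm
        exact ⟨by omega, Or.inl (Or.inr ⟨by omega, by omega⟩)⟩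
      · rintro ⟨hne', (⟨hs, hc⟩ | ⟨hs, hc⟩) | (⟨hs, hc⟩ | ⟨hs, hc⟩)⟩
        · omega
        · have ha0 : N + k - 2 - (a : ℕ) = 0 := by omega
          have hb0 : (b : ℕ) = k - 1 := by omega
          rw [ha0, hb0]; exact hxyadj.symm
        · omega
        · omega
    · rw [(hφge a (by omega)).1, (hφge b (by omega)).1]
      constructor
      · intro h
        rcases hyind _ (hφge a (by omega)).2 _ (hφge b (by omega)).2 h with h' | h'
        · exact ⟨by omega, Or.inr (Or.inl ⟨by omega, by omega⟩)⟩
        · exact ⟨by omega, Or.inl (Or.inl ⟨by omega, by omega⟩)⟩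
      · rintro ⟨hne', (⟨hs, hc⟩ | ⟨hs, hc⟩) | (⟨hs, hc⟩ | ⟨hs, hc⟩)⟩
        · -- b = a + 1, both ≥ N : y-edge
          have : N + k - 2 - (a : ℕ) = (N + k - 2 - (b : ℕ)) + 1 := by omega
          rw [this]
          exact (hyadj _ (by omega)).symm
        · omega
        · have : N + k - 2 - (b : ℕ) = (N + k - 2 - (a : ℕ)) + 1 := by omega
          rw [this]
          exact hyadj _ (by omega)
        · omega

end TrimAux

namespace TrimAux

open SimpleGraph

variable {V : Type*} {G : SimpleGraph V}

lemma emb2P {n : ℕ} (x y : ℕ → V)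
    (hxadj : ∀ i, i + 1 < n → G.Adj (x i) (x (i+1)))
    (hxind : ∀ i, i < n → ∀ j, j < n → G.Adj (x i) (x j) → (j = i+1 ∨ i = j+1))
    (hxinj : ∀ i, i < n → ∀ j, j < n → x i = x j → i = j)
    (hyadj : ∀ i, i + 1 < n → G.Adj (y i) (y (i+1)))
    (hyind : ∀ i, i < n → ∀ j, j < n → G.Adj (y i) (y j) → (j = i+1 ∨ i = j+1))
    (hyinj : ∀ i, i < n → ∀ j, j < n → y i = y j → i = j)
    (hxy : ∀ i, i < n → ∀ j, j < n → ¬ G.Adj (x i) (y j))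
    (hne : ∀ i, i < n → ∀ j, j < n → x i ≠ y j) :
    ContainsInduced G (twoPaths n) := by
  refine ⟨⟨⟨fun a => Sum.elim (fun i => x i.val) (fun i => y i.val) a, ?_⟩, ?_⟩⟩
  · rintro (a | a) (b | b) hab <;> simp only [Sum.elim_inl, Sum.elim_inr] at hab
    · exact congrArg Sum.inl (Fin.ext (hxinj a.val a.isLt b.val b.isLt hab))
    · exact absurd hab (hne a.val a.isLt b.val b.isLt)
    · exact absurd hab.symm (hne b.val b.isLt a.val a.isLt)
    · exact congrArg Sum.inr (Fin.ext (hyinj a.val a.isLt b.val b.isLt hab))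
  · intro a b
    change G.Adj (Sum.elim (fun i : Fin n => x i.val) (fun i : Fin n => y i.val) a)
      (Sum.elim (fun i : Fin n => x i.val) (fun i : Fin n => y i.val) b) ↔ _
    revert a b
    rintro (a | a) (b | b) <;>
      simp only [RelEmbedding.coe_mk, Function.Embedding.coeFn_mk, Sum.elim_inl, Sum.elim_inr, twoPaths,
        SimpleGraph.sum_adj, pathGraph_adj]
    · constructor
      · intro h
        rcases hxind a.val a.isLt b.val b.isLt h with h' | h'
        · exact Or.inl h'.symm
        · exact Or.inr h'.symm
      · rintro (h | h)
        · exact h ▸ hxadj a.val (h ▸ b.isLt)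
        · exact (h ▸ hxadj b.val (h ▸ a.isLt)).symm
    · simp [hxy a.val a.isLt b.val b.isLt]
    · constructor
      · intro h; exact absurd h.symm (hxy b.val b.isLt a.val a.isLt)
      · simp
    · constructor
      · intro h
        rcases hyind a.val a.isLt b.val b.isLt h with h' | h'
        · exact Or.inl h'.symm
        · exact Or.inr h'.symm
      · rintro (h | h)
        · exact h ▸ hyadj a.val (h ▸ b.isLt)
        · exact (h ▸ hyadj b.val (h ▸ a.isLt)).symm

end TrimAux

namespace TrimAux

open SimpleGraph

variable {V : Type*} {G : SimpleGraph V}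

section Pendant

variable (hG : G.IsTree) {v : ℕ → V} {d : ℕ}
  (hvadj : ∀ i < d, G.Adj (v i) (v (i+1)))
  (hvinj : ∀ i ≤ d, ∀ j ≤ d, v i = v j → i = j)

include hG hvadj hvinj

lemma L_of_window {N k m c : ℕ}
    (hk3 : 3 ≤ k) (hkN : k ≤ N - 2)
    (e : ℕ → ℕ) (hed : ∀ i < N, e i ≤ d)
    (hestep : ∀ i, i + 1 < N → (e (i+1) = e i + 1 ∨ e i = e (i+1) + 1))
    (heind : ∀ i, i < N → ∀ j, j < N → (e j = e i + 1 ∨ e i = e j + 1) → (j = i+1 ∨ i = j+1))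
    (heinj : ∀ i, i < N → ∀ j, j < N → e i = e j → i = j)
    (hek : e (k-1) = m)
    (hkc : k ≤ c + 2) (hc : 1 ≤ c) {y : ℕ → V}
    (hyadj : ∀ j < c, G.Adj (y j) (y (j+1)))
    (hyinj : ∀ i ≤ c, ∀ j ≤ c, y i = y j → i = j)
    (hy0 : G.Adj (v m) (y 0))
    (hy0P : ∀ i ≤ d, y 0 ≠ v i)
    (hyNP : ∀ j, 1 ≤ j → j ≤ c → y j ∉ NP G v d) :
    ContainsInduced G (Lgraph N k) := by
  have hkN' : k - 1 < N := by omega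
  have hm : m ≤ d := hek ▸ hed (k-1) hkN'
  apply embL hk3 hkN (fun i => v (e i)) y
  · -- hxadj
    intro i hi
    rcases hestep i hi with h | h
    · have := hvadj (e i) (by have := hed (i+1) hi; omega)
      rwa [← h] at this
    · have := hvadj (e (i+1)) (by have := hed i (by omega); omega)
      rw [← h] at this
      exact this.symm
  · -- hxind
    intro i hi j hj hadj
    exact heind i hi j hj (P_induced hG hvadj hvinj (hed i hi) (hed j hj) hadj)
  · -- hxinj
    intro i hi j hj hij
    exact heinj i hi j hj (hvinj _ (hed i hi) _ (hed j hj) hij)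
  · -- hyadj
    intro j hj
    exact hyadj j (by omega)
  · -- hyind
    intro i hi j hj hadj
    exact chain_induced hG hyadj hyinj i (by omega) j (by omega) hadj
  · -- hyinj
    intro i hi j hj hij
    exact hyinj i (by omega) j (by omega) hij
  · -- hxyadj
    simpa only [hek] using hy0
  · -- hxynot
    intro i hi j hj hadj
    rcases Nat.eq_zero_or_pos j with rfl | hj1
    · have : e i = m := by
        have h1 := attach_unique hG hvadj hvinj hy0P (hed i hi) hm hadj hy0
        exact h1
      exact ⟨heinj i hi (k-1) hkN' (this.trans hek.symm), rfl⟩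
    · exact absurd (mem_NP_of_adj (hed i hi) hadj) (hyNP j hj1 (by omega))
  · -- hne
    intro i hi j hj hne'
    rcases Nat.eq_zero_or_pos j with rfl | hj1
    · exact (hy0P (e i) (hed i hi)) hne'.symm
    · exact (hyNP j hj1 (by omega)) (hne' ▸ v_mem_NP (hed i hi))

lemma pendant {n : ℕ} (hn : 4 ≤ n) (hF : SatisfiesF G n d)
    {m c : ℕ} (hm : m ≤ d) (hc : 1 ≤ c) {y : ℕ → V}
    (hyadj : ∀ j < c, G.Adj (y j) (y (j+1)))
    (hyinj : ∀ i ≤ c, ∀ j ≤ c, y i = y j → i = j)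
    (hy0 : G.Adj (v m) (y 0))
    (hy0P : ∀ i ≤ d, y 0 ≠ v i)
    (hyNP : ∀ j, 1 ≤ j → j ≤ c → y j ∉ NP G v d)
    (hsm : c + 1 ≤ m) (hsd : c + 1 ≤ d - m)
    (hcrit : n ≤ max m (d - m) + c + 2) : False := by
  obtain ⟨hlp, hd1, hd2, h2P, hL⟩ := hF
  rcases eq_or_lt_of_le hn with h4 | h5
  · -- n = 4, use Lgraph 5 3
    rw [← h4] at hL
    rw [if_pos rfl] at hL
    refine hL ?_
    refine L_of_window hG hvadj hvinj (by omega) (by omega) (fun i => m + 2 - i)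
      (fun i hi => by omega) (fun i hi => by omega) (fun i hi j hj h => by omega)
      (fun i hi j hj h => by omega) (by omega) (by omega) hc hyadj hyinj hy0 hy0P hyNP
  · have hL' : ∀ k', 3 ≤ k' → k' ≤ n - 2 → ¬ ContainsInduced G (Lgraph n k') := by
      rw [if_neg (by omega)] at hL
      exact hL
    rcases le_total m (d - m) with htt | htt
    · -- t = d - m, window to the right
      rw [max_eq_right htt] at hcrit
      set k := max 3 (n - (d - m)) with hk
      have hk1 : 3 ≤ k := le_max_left _ _
      have hk2 : n - (d - m) ≤ k := le_max_right _ _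
      have hk4 : k ≤ c + 2 := max_le (by omega) (by omega)
      have hkn2 : k ≤ n - 2 := max_le (by omega) (by omega)
      refine hL' k hk1 hkn2 ?_
      refine L_of_window hG hvadj hvinj hk1 hkn2 (fun i => m + i - (k-1))
        (fun i hi => by omega) (fun i hi => by omega) (fun i hi j hj h => by omega)
        (fun i hi j hj h => by omega) (by omega) hk4 hc hyadj hyinj hy0 hy0P hyNP
    · -- t = m, window to the left
      rw [max_eq_left htt] at hcrit
      set k := max 3 (n - m) with hk
      have hk1 : 3 ≤ k := le_max_left _ _
      have hk2 : n - m ≤ k := le_max_right _ _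
      have hk4 : k ≤ c + 2 := max_le (by omega) (by omega)
      have hkn2 : k ≤ n - 2 := max_le (by omega) (by omega)
      refine hL' k hk1 hkn2 ?_
      refine L_of_window hG hvadj hvinj hk1 hkn2 (fun i => m + (k-1) - i)
        (fun i hi => by omega) (fun i hi => by omega) (fun i hi j hj h => by omega)
        (fun i hi j hj h => by omega) (by omega) hk4 hc hyadj hyinj hy0 hy0P hyNP

end Pendant

end TrimAux

namespace TrimAux

open SimpleGraph

variable {V : Type*} {G : SimpleGraph V}

section OneSided

variable (hG : G.IsTree) {v : ℕ → V} {d n : ℕ}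
  (hvadj : ∀ i < d, G.Adj (v i) (v (i+1)))
  (hvinj : ∀ i ≤ d, ∀ j ≤ d, v i = v j → i = j)

include hG hvadj hvinj

lemma oneSided (hn : 4 ≤ n) (hF : SatisfiesF G n d)
    {q : ℕ → V}
    (hqadj : ∀ j, j + 1 < n → G.Adj (q j) (q (j+1)))
    (hqinj : ∀ i, i < n → ∀ j, j < n → q i = q j → i = j)
    {a₂ : ℕ} (ha₂ : a₂ + 1 < n) (hmem : q a₂ ∈ NP G v d)
    (htail : ∀ j, a₂ < j → j < n → q j ∉ NP G v d)
    (hintv : ∀ j, j < a₂ → q j ∉ NP G v d → ∀ j', j' ≤ j → q j' ∉ NP G v d) :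
    False := by
  classical
  have hlong := hF.1.2
  have hd1 : n - 1 ≤ d := hF.2.1
  have hd2 : d ≤ 2*n - 1 := hF.2.2.1
  have hq2P : ∀ i ≤ d, q a₂ ≠ v i := by
    intro i hi hqi
    refine htail (a₂+1) (by omega) (by omega) ?_
    exact mem_NP_of_adj hi (hqi ▸ hqadj a₂ ha₂)
  obtain ⟨m, hm, hm2⟩ := hmem
  rcases hm2 with h | hm2
  · exact absurd h (hq2P m hm)
  have htail' : ∀ j, a₂ < j → j < n → ∀ i ≤ d, q j ≠ v i := by
    intro j hj1 hj2 i hi h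
    exact htail j hj1 hj2 (h ▸ v_mem_NP hi)
  set ℓ := n - 1 - a₂ with hℓ
  have hℓ1 : 1 ≤ ℓ := by omega
  -- the right branch data, as a pendant chain
  have hyadjR : ∀ j < ℓ, G.Adj (q (a₂ + j)) (q (a₂ + (j+1))) := by
    intro j hj
    rw [show a₂ + (j+1) = (a₂ + j) + 1 by omega]
    exact hqadj (a₂ + j) (by omega)
  have hyinjR : ∀ i ≤ ℓ, ∀ j ≤ ℓ, q (a₂ + i) = q (a₂ + j) → i = j := by
    intro i hi j hj h
    have := hqinj (a₂+i) (by omega) (a₂+j) (by omega) h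
    omega
  have hbd : ℓ + 1 ≤ d - m := by
    have hglue := glue_le (G := G) (d := d) (n := n) hlong (x := v) (A := m)
      (y := fun j => q (a₂ + j)) (B := ℓ)
      (fun i hi => hvadj i (by omega))
      (fun j hj => by exact hyadjR j hj)
      (by simp only [Nat.add_zero]; exact hm2)
      (fun i hi j hj h => hvinj i (by omega) j (by omega) h)
      (fun i hi j hj h => by exact hyinjR i hi j hj h)
      ?_
    · omega
    · intro i hi j hj h
      rcases Nat.eq_zero_or_pos j with rfl | hj1
      · rw [Nat.add_zero] at h
        exact hq2P i (by omega) h.symm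
      · exact htail' (a₂+j) (by omega) (by omega) i (by omega) h.symm
  have hbm : ℓ + 1 ≤ m := by
    have hglue := glue_le (G := G) (d := d) (n := n) hlong (x := fun t => v (d - t))
      (A := d - m) (y := fun j => q (a₂ + j)) (B := ℓ)
      ?_ (fun j hj => by exact hyadjR j hj) ?_
      (fun i hi j hj h => by
        have := hvinj (d-i) (by omega) (d-j) (by omega) h
        omega)
      (fun i hi j hj h => by exact hyinjR i hi j hj h)
      ?_
    · omega
    · intro i hi
      have h' := hvadj (d - (i+1)) (by omega)
      rw [show d - (i+1) + 1 = d - i by omega] at h'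
      exact h'.symm
    · simp only [Nat.add_zero]
      rw [show d - (d - m) = m by omega]
      exact hm2
    · intro i hi j hj h
      rcases Nat.eq_zero_or_pos j with rfl | hj1
      · rw [Nat.add_zero] at h
        exact hq2P (d-i) (by omega) h.symm
      · exact htail' (a₂+j) (by omega) (by omega) (d-i) (by omega) h.symm
  by_cases hcrit : n ≤ max m (d - m) + ℓ + 2
  · exact pendant hG hvadj hvinj hn hF hm hℓ1 (y := fun j => q (a₂ + j))
      (fun j hj => by exact hyadjR j hj)
      (fun i hi j hj h => by exact hyinjR i (by omega) j (by omega) h)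
      (by simp only [Nat.add_zero]; exact hm2)
      (fun i hi => by simp only [Nat.add_zero]; exact hq2P i hi)
      (fun j hj1 hj2 => by exact htail (a₂+j) (by omega) (by omega))
      hbm hbd hcrit
  · push_neg at hcrit
    have hmax1 : m ≤ max m (d - m) := le_max_left _ _
    have hmax2 : d - m ≤ max m (d - m) := le_max_right _ _
    have hma : m + 2 ≤ a₂ := by omega
    have hda : (d - m) + 2 ≤ a₂ := by omega
    by_cases hsing : ∀ j, j < a₂ → q j ∉ NP G v d
    · -- only q a₂ is near P on the left: left branch too long
      have hglue := glue_le (G := G) (d := d) (n := n) hlong (x := fun t => v (d - t))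
        (A := d - m) (y := fun j => q (a₂ - j)) (B := a₂)
        ?_ ?_ ?_
        (fun i hi j hj h => by
          have := hvinj (d-i) (by omega) (d-j) (by omega) h
          omega)
        (fun i hi j hj h => by
          have := hqinj (a₂-i) (by omega) (a₂-j) (by omega) h
          omega)
        ?_
      · omega
      · intro i hi
        have h' := hvadj (d - (i+1)) (by omega)
        rw [show d - (i+1) + 1 = d - i by omega] at h'
        exact h'.symm
      · intro j hj
        rw [show a₂ - j = (a₂ - (j+1)) + 1 by omega]
        exact (hqadj (a₂ - (j+1)) (by omega)).symm
      · simp only [Nat.sub_zero]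
        rw [show d - (d - m) = m by omega]
        exact hm2
      · intro i hi j hj h
        rcases Nat.eq_zero_or_pos j with rfl | hj1
        · rw [Nat.sub_zero] at h
          exact hq2P (d-i) (by omega) h.symm
        · refine hsing (a₂ - j) (by omega) ?_
          rw [← h]
          exact v_mem_NP (by omega)
    · push_neg at hsing
      obtain ⟨j₁, hj₁, hj₁NP⟩ := hsing
      have hprev : q (a₂ - 1) ∈ NP G v d := by
        by_contra hnp
        exact hintv (a₂-1) (by omega) hnp j₁ (by omega) hj₁NP
      have hadj_prev : G.Adj (q (a₂-1)) (q a₂) := by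
        have := hqadj (a₂-1) (by omega)
        rwa [show a₂ - 1 + 1 = a₂ by omega] at this
      have hprevP : q (a₂ - 1) = v m := by
        by_cases hex : ∃ i ≤ d, q (a₂-1) = v i
        · obtain ⟨e, he, heq⟩ := hex
          have hadje : G.Adj (v e) (q a₂) := heq ▸ hadj_prev
          have : e = m := attach_unique hG hvadj hvinj hq2P he hm hadje hm2
          rw [heq, this]
        · exfalso
          push_neg at hex
          obtain ⟨c₀, hc₀, hcase⟩ := hprev
          rcases hcase with h | h
          · exact (hex c₀ hc₀) h
          · exact no_H1 hG hvadj hvinj hex hq2P hadj_prev hc₀ hm h hm2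
      have hexΦ : ∃ r, r ≤ a₂ - 1 ∧ ∀ i, r ≤ i → i ≤ a₂ - 1 → ∃ e ≤ d, q i = v e :=
        ⟨a₂ - 1, le_rfl, fun i hi1 hi2 =>
          ⟨m, hm, by rw [show i = a₂ - 1 by omega]; exact hprevP⟩⟩
      set r := Nat.find hexΦ with hrdef
      obtain ⟨hrle, hrun⟩ : r ≤ a₂ - 1 ∧ ∀ i, r ≤ i → i ≤ a₂ - 1 → ∃ e ≤ d, q i = v e :=
        Nat.find_spec hexΦ
      obtain ⟨mt, hmtd, hmt⟩ := hrun r le_rfl hrle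
      -- distance between v mt and v m equals a₂ - 1 - r
      have hdist : max mt m - min mt m = a₂ - 1 - r := by
        have hadjseg : ∀ t < a₂ - 1 - r,
            G.Adj ((fun t => q (r + t)) t) ((fun t => q (r + t)) (t+1)) := by
          intro t ht
          simp only
          rw [show r + (t+1) = (r+t)+1 by omega]
          exact hqadj (r+t) (by omega)
        have hw : ((chainWalk (G := G) (fun t => q (r + t)) (a₂ - 1 - r) hadjseg).copy
            ((congrArg q (Nat.add_zero r)).trans hmt)
            ((congrArg q (show r + (a₂ - 1 - r) = a₂ - 1 by omega)).trans hprevP)).IsPath := by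
          rw [SimpleGraph.Walk.isPath_copy]
          refine chainWalk_isPath _ _ _ ?_
          intro s hs t ht hst
          have := hqinj (r+s) (by omega) (r+t) (by omega) hst
          omega
        have := (path_between hG hvadj hvinj hmtd hm hw).1
        rw [SimpleGraph.Walk.length_copy, chainWalk_length] at this
        omega
      rcases Nat.eq_zero_or_pos r with hr0 | hr1
      · rcases le_total mt m with h | h
        · rw [max_eq_right h, min_eq_left h] at hdist
          omega
        · rw [max_eq_left h, min_eq_right h] at hdist
          omega
      · have hnotΦ : ¬ (r - 1 ≤ a₂ - 1 ∧ ∀ i, r - 1 ≤ i → i ≤ a₂ - 1 → ∃ e ≤ d, q i = v e) :=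
          Nat.find_min hexΦ (by omega)
        have hr1P : ∀ e ≤ d, q (r-1) ≠ v e := by
          intro e he heq
          apply hnotΦ
          refine ⟨by omega, fun i hi1 hi2 => ?_⟩
          rcases eq_or_lt_of_le hi1 with h | hlt
          · exact ⟨e, he, h ▸ heq⟩
          · exact hrun i (by omega) hi2
        have hadjr : G.Adj (q (r-1)) (v mt) := by
          have := hqadj (r-1) (by omega)
          rw [show r - 1 + 1 = r by omega] at this
          rwa [hmt] at this
        have hleft : ∀ j, j + 2 ≤ r → q j ∉ NP G v d := by
          intro j hj
          have hr2NP : q (r-2) ∉ NP G v d := by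
            intro hnp
            have hadj2 : G.Adj (q (r-2)) (q (r-1)) := by
              have := hqadj (r-2) (by omega)
              rwa [show r - 2 + 1 = r - 1 by omega] at this
            by_cases hexP : ∃ i ≤ d, q (r-2) = v i
            · obtain ⟨e, he, heq⟩ := hexP
              have hadje : G.Adj (v e) (q (r-1)) := heq ▸ hadj2
              have hemt : e = mt := attach_unique hG hvadj hvinj hr1P he hmtd hadje hadjr.symm
              have : q (r-2) = q r := by rw [heq, hemt, hmt]
              have := hqinj (r-2) (by omega) r (by omega) this
              omega
            · push_neg at hexP
              obtain ⟨c₂, hc₂, hcase⟩ := hnp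
              rcases hcase with h | h
              · exact (hexP c₂ hc₂) h
              · exact no_H1 hG hvadj hvinj hexP hr1P hadj2 hc₂ hmtd h hadjr.symm
          exact hintv (r-2) (by omega) hr2NP j (by omega)
        have hr_le_mt : r ≤ mt := by
          have hglue := glue_le (G := G) (d := d) (n := n) hlong (x := q) (A := r - 1)
            (y := fun j => v (mt + j)) (B := d - mt)
            (fun i hi => hqadj i (by omega))
            ?_ ?_
            (fun i hi j hj h => hqinj i (by omega) j (by omega) h)
            (fun i hi j hj h => by
              have := hvinj (mt+i) (by omega) (mt+j) (by omega) h
              omega)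
            ?_
          · omega
          · intro j hj
            rw [show mt + (j+1) = (mt + j) + 1 by omega]
            exact hvadj (mt+j) (by omega)
          · simp only [Nat.add_zero]
            exact hadjr
          · intro i hi j hj h
            rcases eq_or_lt_of_le hi with h' | h'
            · exact hr1P (mt+j) (by omega) (h' ▸ h)
            · refine hleft i (by omega) ?_
              rw [h]
              exact v_mem_NP (by omega)
        have hr_le_dmt : r ≤ d - mt := by
          have hglue := glue_le (G := G) (d := d) (n := n) hlong (x := q) (A := r - 1)
            (y := fun j => v (mt - j)) (B := mt)
            (fun i hi => hqadj i (by omega))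
            ?_ ?_
            (fun i hi j hj h => hqinj i (by omega) j (by omega) h)
            (fun i hi j hj h => by
              have := hvinj (mt-i) (by omega) (mt-j) (by omega) h
              omega)
            ?_
          · omega
          · intro j hj
            have h' := hvadj (mt - (j+1)) (by omega)
            rw [show mt - (j+1) + 1 = mt - j by omega] at h'
            exact h'.symm
          · simp only [Nat.sub_zero]
            exact hadjr
          · intro i hi j hj h
            rcases eq_or_lt_of_le hi with h' | h'
            · exact hr1P (mt-j) (by omega) (h' ▸ h)
            · refine hleft i (by omega) ?_
              rw [h]
              exact v_mem_NP (by omega)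
        rcases le_total mt m with h | h
        · rw [max_eq_right h, min_eq_left h] at hdist
          omega
        · rw [max_eq_left h, min_eq_right h] at hdist
          omega

end OneSided

end TrimAux

namespace TrimAux

open SimpleGraph

variable {V : Type*} {G : SimpleGraph V}

section MainMem

variable (hG : G.IsTree) {v : ℕ → V} {d n : ℕ}
  (hvadj : ∀ i < d, G.Adj (v i) (v (i+1)))
  (hvinj : ∀ i ≤ d, ∀ j ≤ d, v i = v j → i = j)

include hG hvadj hvinj

lemma main_mem (hn : 4 ≤ n) (hF : SatisfiesF G n d)
    {q : ℕ → V}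
    (hqadj : ∀ j, j + 1 < n → G.Adj (q j) (q (j+1)))
    (hqinj : ∀ i, i < n → ∀ j, j < n → q i = q j → i = j) :
    ∀ j₀, j₀ < n → q j₀ ∈ NP G v d := by
  classical
  by_contra hcon
  push_neg at hcon
  obtain ⟨j₀, hj₀, hj₀NP⟩ := hcon
  have hd1 : n - 1 ≤ d := hF.2.1
  by_cases hA : ∀ j, j < n → q j ∉ NP G v d
  · refine hF.2.2.2.1 ?_
    have hqind := chain_induced hG (N := n - 1)
      (fun i hi => hqadj i (by omega))
      (fun i hi j hj h => hqinj i (by omega) j (by omega) h)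
    refine emb2P (n := n) v q
      (fun i hi => hvadj i (by omega))
      (fun i hi j hj h => P_induced hG hvadj hvinj (by omega) (by omega) h)
      (fun i hi j hj h => hvinj i (by omega) j (by omega) h)
      hqadj
      (fun i hi j hj h => hqind i (by omega) j (by omega) h)
      hqinj
      (fun i hi j hj h => hA j hj (mem_NP_of_adj (by omega) h))
      (fun i hi j hj h => hA j hj (h ▸ v_mem_NP (by omega)))
  · push_neg at hA
    obtain ⟨jw, hjw, hjwNP⟩ := hA
    have hIntvGen : ∀ i k l, i ≤ l → l ≤ k → k < n → q i ∈ NP G v d → q k ∈ NP G v d →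
        q l ∈ NP G v d := by
      intro i k l hil hlk hk hqi hqk
      by_contra hl
      have hlk' : l < k := by
        rcases eq_or_lt_of_le hlk with rfl | h
        · exact absurd hqk hl
        · exact h
      set i' := Nat.findGreatest (fun j => q j ∈ NP G v d) l with hi'def
      have hi'le : i ≤ i' := Nat.le_findGreatest hil hqi
      have hi'spec : q i' ∈ NP G v d := Nat.findGreatest_spec (P := fun j => q j ∈ NP G v d) hil hqi
      have hi'l : i' ≤ l := Nat.findGreatest_le l
      have hi'lt : i' < l := by
        rcases eq_or_lt_of_le hi'l with h | h
        · exact absurd (h ▸ hi'spec) hl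
        · exact h
      have hmid : q (i' + 1) ∉ NP G v d := by
        rcases eq_or_lt_of_le (Nat.succ_le_of_lt hi'lt) with h | h
        · have h' : i' + 1 = l := by omega
          rw [h']
          exact hl
        · exact Nat.findGreatest_is_greatest (P := fun j => q j ∈ NP G v d) (n := l)
            (by omega) (by omega)
      exact gap hG hvadj hvinj hqadj hqinj (i := i') (k := k) (by omega) hk hi'spec hqk hmid
    set a₂ := Nat.findGreatest (fun j => q j ∈ NP G v d) (n-1) with ha₂def
    have ha₂spec : q a₂ ∈ NP G v d := Nat.findGreatest_spec (P := fun j => q j ∈ NP G v d) (by omega) hjwNP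
    have ha₂le : a₂ ≤ n - 1 := Nat.findGreatest_le _
    have htail : ∀ j, a₂ < j → j < n → q j ∉ NP G v d := fun j h1 h2 =>
      Nat.findGreatest_is_greatest (P := fun j => q j ∈ NP G v d) h1 (by omega)
    by_cases hcase : a₂ + 1 < n
    · refine oneSided hG hvadj hvinj hn hF hqadj hqinj hcase ha₂spec htail ?_
      intro j hj hjNP j' hj' hj'NP
      exact hjNP (hIntvGen j' a₂ j hj' (by omega) (by omega) hj'NP ha₂spec)
    · have hq0 : q 0 ∉ NP G v d := by
        intro h0
        exact hj₀NP (hIntvGen 0 a₂ j₀ (by omega) (by omega) (by omega) h0 ha₂spec)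
      set q' : ℕ → V := fun j => q (n - 1 - j) with hq'def
      have hq'adj : ∀ j, j + 1 < n → G.Adj (q' j) (q' (j+1)) := by
        intro j hj
        simp only [hq'def]
        rw [show n - 1 - j = (n - 1 - (j+1)) + 1 by omega]
        exact (hqadj (n - 1 - (j+1)) (by omega)).symm
      have hq'inj : ∀ i, i < n → ∀ j, j < n → q' i = q' j → i = j := by
        intro i hi j hj h
        simp only [hq'def] at h
        have := hqinj (n-1-i) (by omega) (n-1-j) (by omega) h
        omega
      set b₂ := Nat.findGreatest (fun j => q' j ∈ NP G v d) (n-1) with hb₂def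
      have hb₂spec : q' b₂ ∈ NP G v d := by
        refine Nat.findGreatest_spec (P := fun j => q' j ∈ NP G v d) (m := n - 1 - jw) (by omega) ?_
        show q (n - 1 - (n - 1 - jw)) ∈ NP G v d
        rw [show n - 1 - (n - 1 - jw) = jw by omega]
        exact hjwNP
      have hb₂le : b₂ ≤ n - 1 := Nat.findGreatest_le _
      have hb₂tail : ∀ j, b₂ < j → j < n → q' j ∉ NP G v d := fun j h1 h2 =>
        Nat.findGreatest_is_greatest (P := fun j => q' j ∈ NP G v d) h1 (by omega)
      have hb₂lt : b₂ + 1 < n := by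
        rcases eq_or_lt_of_le hb₂le with h | h
        · exfalso
          apply hq0
          have : q' (n-1) ∈ NP G v d := h ▸ hb₂spec
          simpa [hq'def] using this
        · omega
      refine oneSided hG hvadj hvinj hn hF hq'adj hq'inj hb₂lt hb₂spec hb₂tail ?_
      intro j hj hjNP j' hj' hj'NP
      apply hjNP
      have := hIntvGen (n-1-b₂) (n-1-j') (n-1-j) (by omega) (by omega) (by omega)
        hb₂spec hj'NP
      exact this

end MainMem

end TrimAux

/-- If `G` is a tree satisfying `(F_n)` (`n ≥ 4`) and `v_1, …, v_{d+1}` is a longest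
path, then `J_n(G) = J_n(trim G)`, where `trim G` is the induced subgraph of `G` on
the union of the closed neighbourhoods of the `v_i`. -/
theorem pathIdeal_trim (K : Type*) [Field K] {V : Type*} (G : SimpleGraph V)
    (hG : G.IsTree) (n d : ℕ) (hn : 4 ≤ n) (hF : SatisfiesF G n d)
    {a b : V} (p : G.Walk a b) (hp : p.IsPath) (hpl : p.length = d) :
    pathIdeal K G n =
      pathIdeal K
        (restrictTo G {v : V | ∃ i ≤ d, v = p.getVert i ∨ G.Adj (p.getVert i) v}) n := by
  classical
  have hvadj : ∀ i < d, G.Adj (p.getVert i) (p.getVert (i+1)) := by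
    intro i hi
    exact p.adj_getVert_succ (by omega)
  have hvinj : ∀ i ≤ d, ∀ j ≤ d, p.getVert i = p.getVert j → i = j := by
    intro i hi j hj h
    exact TrimAux.getVert_injOn hp i (by omega) j (by omega) h
  have hmain : ∀ (f : Fin n → V), Function.Injective f →
      (∀ i j : Fin n, (j : ℕ) = (i : ℕ) + 1 → G.Adj (f i) (f j)) →
      ∀ i : Fin n, f i ∈ TrimAux.NP G (fun t => p.getVert t) d := by
    intro f hfinj hfadj i
    have hnpos : 0 < n := by omega
    set q : ℕ → V := fun j => f ⟨j % n, Nat.mod_lt _ hnpos⟩ with hq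
    have hqf : ∀ j, (hj : j < n) → q j = f ⟨j, hj⟩ := by
      intro j hj
      simp only [hq]
      congr 1
      exact Fin.ext (Nat.mod_eq_of_lt hj)
    have hqadj : ∀ j, j + 1 < n → G.Adj (q j) (q (j+1)) := by
      intro j hj
      rw [hqf j (by omega), hqf (j+1) hj]
      exact hfadj _ _ (by simp)
    have hqinj : ∀ a', a' < n → ∀ b', b' < n → q a' = q b' → a' = b' := by
      intro a' ha' b' hb' h
      rw [hqf a' ha', hqf b' hb'] at h
      have := hfinj h
      simpa using congrArg Fin.val this
    have hmem := TrimAux.main_mem hG hvadj hvinj hn hF hqadj hqinj i.val i.isLt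
    have h2 : q i.val = f i := by
      simp only [hq]
      congr 1
      exact Fin.ext (Nat.mod_eq_of_lt i.isLt)
    rwa [h2] at hmem
  unfold pathIdeal
  congr 1
  ext g
  simp only [Set.mem_setOf_eq]
  constructor
  · rintro ⟨f, hfinj, hfadj, rfl⟩
    refine ⟨f, hfinj, fun i j hij => ⟨hfadj i j hij, ?_, ?_⟩, rfl⟩
    · exact hmain f hfinj hfadj i
    · exact hmain f hfinj hfadj j
  · rintro ⟨f, hfinj, hfadj, rfl⟩
    exact ⟨f, hfinj, fun i j hij => (hfadj i j hij).1, rfl⟩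
end

section
/- Let G be a caterpillar tree of diameter 2n − 2 (n ≥ 4) with central path x_1,…,x_{2n−3}, containing no induced P_n + P_n. Then x_{n−2} or x_n has no leaf neighbors. -/
open MvPolynomial

/-- A vertex is a leaf if it has exactly one neighbour. -/
def IsLeafVertex {V : Type*} (G : SimpleGraph V) (v : V) : Prop :=
  (G.neighborSet v).ncard = 1

/-- `y` is a leaf neighbour of `v`: a leaf vertex adjacent to `v`. -/
def IsLeafNbr {V : Type*} (G : SimpleGraph V) (v y : V) : Prop :=
  G.Adj v y ∧ IsLeafVertex G y

/-- `G` is a caterpillar tree with central path `x 1, x 2, …, x m`: the vertices of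
degree at least `2` are exactly `x 1, …, x m`, and they form a path. -/
def IsCaterpillarWithCentralPath {V : Type*} (G : SimpleGraph V) (m : ℕ) (x : ℕ → V) : Prop :=
  G.IsTree ∧ Set.InjOn x (Set.Icc 1 m) ∧
    (∀ i : ℕ, 1 ≤ i → i + 1 ≤ m → G.Adj (x i) (x (i + 1))) ∧
    {v : V | 2 ≤ (G.neighborSet v).ncard} = x '' Set.Icc 1 m

/-- `G` is a caterpillar tree: a tree whose vertices of degree at least `2` form a path. -/
def IsCaterpillar {V : Type*} (G : SimpleGraph V) : Prop :=
  ∃ (m : ℕ) (x : ℕ → V), IsCaterpillarWithCentralPath G m x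


section AuxCaterpillar
open SimpleGraph

variable {V : Type*} {G : SimpleGraph V} {m : ℕ} {x : ℕ → V}

/-- A walk along the central path from `x i` to `x j`. -/
lemma exists_xwalk (hinj : Set.InjOn x (Set.Icc 1 m))
    (hadj : ∀ i : ℕ, 1 ≤ i → i + 1 ≤ m → G.Adj (x i) (x (i + 1)))
    (i j : ℕ) (h1 : 1 ≤ i) (hij : i ≤ j) (hjm : j ≤ m) :
    ∃ p : G.Walk (x i) (x j), p.IsPath ∧ p.length = j - i ∧
      ∀ v, v ∈ p.support ↔ ∃ k, i ≤ k ∧ k ≤ j ∧ v = x k := by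
  have key : ∀ (l i : ℕ), 1 ≤ i → i + l ≤ m →
      ∃ p : G.Walk (x i) (x (i + l)),
        p.support = (List.range (l + 1)).map (fun k => x (i + k)) := by
    intro l
    induction l with
    | zero =>
      intro i h1 h2
      refine ⟨(Walk.nil : G.Walk (x i) (x i)).copy rfl (by norm_num), ?_⟩
      simp [List.range_succ]
    | succ l ih =>
      intro i h1 h2
      obtain ⟨p, hp⟩ := ih (i + 1) (by omega) (by omega)
      refine ⟨(Walk.cons (hadj i h1 (by omega)) p).copy rfl
        (congrArg x (by omega)), ?_⟩
      rw [Walk.support_copy, Walk.support_cons, hp]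
      conv_rhs => rw [List.range_succ_eq_map]
      rw [List.map_cons, List.map_map]
      congr 1
      apply List.map_congr_left
      intro k _
      simp only [Function.comp_apply, Nat.succ_eq_add_one]
      congr 1
      omega
  obtain ⟨p0, hs⟩ := key (j - i) i h1 (by omega)
  refine ⟨p0.copy rfl (congrArg x (by omega)), ?_, ?_, ?_⟩
  · rw [Walk.isPath_def, Walk.support_copy, hs]
    refine List.Nodup.map_on ?_ List.nodup_range
    intro a ha b hb hab
    rw [List.mem_range] at ha hb
    have := hinj (Set.mem_Icc.2 (by omega)) (Set.mem_Icc.2 (by omega)) hab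
    omega
  · have h1' := Walk.length_support p0
    rw [hs] at h1'
    simp only [List.length_map, List.length_range] at h1'
    rw [Walk.length_copy]
    omega
  · intro v
    rw [Walk.support_copy, hs]
    simp only [List.mem_map, List.mem_range]
    constructor
    · rintro ⟨k, hk, rfl⟩
      exact ⟨i + k, by omega, by omega, rfl⟩
    · rintro ⟨k, hk1, hk2, rfl⟩
      exact ⟨k - i, by omega, by rw [show i + (k - i) = k by omega]⟩

lemma path_len_eq (hT : G.IsTree) {u v : V} {p q : G.Walk u v}
    (hp : p.IsPath) (hq : q.IsPath) : p.length = q.length := by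
  obtain ⟨r, -, hr⟩ := hT.existsUnique_path u v
  rw [hr p hp, hr q hq]

lemma nonadj_far (hT : G.IsTree) (hinj : Set.InjOn x (Set.Icc 1 m))
    (hadj : ∀ i : ℕ, 1 ≤ i → i + 1 ≤ m → G.Adj (x i) (x (i + 1)))
    {i j : ℕ} (h1 : 1 ≤ i) (h2 : i + 2 ≤ j) (h3 : j ≤ m) :
    ¬ G.Adj (x i) (x j) := by
  intro hA
  obtain ⟨p, hp, hl, -⟩ := exists_xwalk hinj hadj i j h1 (by omega) h3
  have hq : (Walk.cons hA Walk.nil : G.Walk (x i) (x j)).IsPath := by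
    rw [Walk.isPath_def]
    simp [hA.ne]
  have := path_len_eq hT hp hq
  simp [hl] at this
  omega

lemma nonadj_branch (hT : G.IsTree) (hinj : Set.InjOn x (Set.Icc 1 m))
    (hadj : ∀ i : ℕ, 1 ≤ i → i + 1 ≤ m → G.Adj (x i) (x (i + 1)))
    {v : V} (hv : ∀ k, 1 ≤ k → k ≤ m → v ≠ x k)
    {i j : ℕ} (h1 : 1 ≤ i) (h2 : i < j) (h3 : j ≤ m)
    (hvi : G.Adj v (x i)) (hvj : G.Adj v (x j)) : False := by
  obtain ⟨p, hp, hl, hsup⟩ := exists_xwalk hinj hadj i j h1 (by omega) h3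
  have hppath : (Walk.cons hvi p).IsPath := by
    rw [Walk.cons_isPath_iff]
    refine ⟨hp, fun hmem => ?_⟩
    obtain ⟨k, hk1, hk2, rfl⟩ := (hsup v).1 hmem
    exact hv k (by omega) (by omega) rfl
  have hqpath : (Walk.cons hvj Walk.nil : G.Walk v (x j)).IsPath := by
    rw [Walk.isPath_def]; simp [hvj.ne]
  have := path_len_eq hT hppath hqpath
  simp [hl] at this
  omega

lemma cat_reverse (h : IsCaterpillarWithCentralPath G m x) :
    IsCaterpillarWithCentralPath G m (fun k => x (m + 1 - k)) := by
  obtain ⟨hT, hinj, hadj, hdeg⟩ := h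
  refine ⟨hT, ?_, ?_, ?_⟩
  · intro a ha b hb hab
    rw [Set.mem_Icc] at ha hb
    have := hinj (Set.mem_Icc.2 (by omega : 1 ≤ m + 1 - a ∧ m + 1 - a ≤ m))
      (Set.mem_Icc.2 (by omega : 1 ≤ m + 1 - b ∧ m + 1 - b ≤ m)) hab
    omega
  · intro i h1 h2
    simp only
    have e1 : m + 1 - i = (m - i) + 1 := by omega
    have e2 : m + 1 - (i + 1) = m - i := by omega
    rw [e1, e2]
    exact (hadj (m - i) (by omega) (by omega)).symm
  · rw [hdeg]
    ext v
    simp only [Set.mem_image, Set.mem_Icc]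
    constructor
    · rintro ⟨k, hk, rfl⟩
      exact ⟨m + 1 - k, by omega, by congr 1; omega⟩
    · rintro ⟨k, hk, rfl⟩
      exact ⟨m + 1 - k, by omega, rfl⟩

lemma exists_off_nbr (hm : 3 ≤ m) (hcat : IsCaterpillarWithCentralPath G m x) :
    ∃ y, G.Adj (x 1) y ∧ ∀ k, 1 ≤ k → k ≤ m → y ≠ x k := by
  obtain ⟨hT, hinj, hadj, hdeg⟩ := hcat
  have hx1 : x 1 ∈ {v : V | 2 ≤ (G.neighborSet v).ncard} := by
    rw [hdeg]
    exact ⟨1, Set.mem_Icc.2 (by omega), rfl⟩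
  have hx1' : 1 < (G.neighborSet (x 1)).ncard := by
    simp only [Set.mem_setOf_eq] at hx1; omega
  obtain ⟨y, hy, hyne⟩ := Set.exists_ne_of_one_lt_ncard hx1' (x 2)
  rw [SimpleGraph.mem_neighborSet] at hy
  refine ⟨y, hy, fun k hk1 hk2 he => ?_⟩
  subst he
  rcases Nat.lt_or_ge k 2 with h | h
  · interval_cases k
    exact hy.ne rfl
  · rcases Nat.eq_or_lt_of_le h with h' | h'
    · exact hyne (by rw [← h'])
    · exact nonadj_far hT hinj hadj (by omega : 1 ≤ 1) (by omega) hk2 hy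

lemma exists_end_leaf (hm : 5 ≤ m) (hcat : IsCaterpillarWithCentralPath G m x)
    (hlen : ∀ (u v : V) (p : G.Walk u v), p.IsPath → p.length ≤ m + 1) :
    ∃ y, G.Adj (x 1) y ∧ (∀ z, G.Adj y z → z = x 1) ∧
      (∀ k, 1 ≤ k → k ≤ m → y ≠ x k) := by
  obtain ⟨hT, hinj, hadj, hdeg⟩ := id hcat
  obtain ⟨y, hyA, hyX⟩ := exists_off_nbr (by omega) hcat
  obtain ⟨y'', hy''A, hy''X⟩ := exists_off_nbr (by omega) (cat_reverse hcat)
  have hy'A : G.Adj (x m) y'' := by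
    simpa [show m + 1 - 1 = m by omega] using hy''A
  have hy'X : ∀ k, 1 ≤ k → k ≤ m → y'' ≠ x k := by
    intro k h1 h2
    have := hy''X (m + 1 - k) (by omega) (by omega)
    simpa [show m + 1 - (m + 1 - k) = k by omega] using this
  have hyy' : y ≠ y'' := by
    intro he
    exact nonadj_branch hT hinj hadj hyX (le_refl 1) (by omega : 1 < m)
      (le_refl m) hyA.symm (he ▸ hy'A.symm)
  refine ⟨y, hyA, ?_, hyX⟩
  intro z hz
  by_contra hzne
  have hzX : ∀ k, 1 ≤ k → k ≤ m → z ≠ x k := by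
    intro k h1 h2 he
    rcases Nat.eq_or_lt_of_le h1 with h' | h'
    · exact hzne (by rw [he, ← h'])
    · exact nonadj_branch hT hinj hadj hyX (le_refl 1) h' h2 hyA.symm (he ▸ hz)
  obtain ⟨q, hq, hql, hqs⟩ := exists_xwalk hinj hadj 1 m (le_refl 1) (by omega) (le_refl m)
  have hyq : y ∉ q.support := fun hmem => by
    obtain ⟨k, h1, h2, he⟩ := (hqs _).1 hmem
    exact hyX k h1 h2 he
  by_cases hzy' : z = y''
  · have hp1 : (Walk.cons hz (Walk.cons (hzy' ▸ hy'A.symm) Walk.nil) :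
        G.Walk y (x m)).IsPath := by
      rw [Walk.isPath_def]
      show (y :: z :: x m :: []).Nodup
      simp only [List.nodup_cons, List.mem_cons, List.mem_singleton, List.not_mem_nil]
      refine ⟨?_, ?_, by simp⟩
      · push_neg
        exact ⟨hz.ne, fun h => hyX m (by omega) (le_refl m) h, trivial⟩
      · push_neg
        exact ⟨fun h => hzX m (by omega) (le_refl m) h, trivial⟩
    have hp2 : (Walk.cons hyA.symm q).IsPath := by
      rw [Walk.cons_isPath_iff]
      exact ⟨hq, hyq⟩
    have := path_len_eq hT hp1 hp2
    simp only [Walk.length_cons, Walk.length_nil, hql] at this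
    omega
  · have hzy : G.Adj z y := hz.symm
    have hy'q : y'' ∉ q.support := fun hmem => by
      obtain ⟨k, h1, h2, he⟩ := (hqs _).1 hmem
      exact hy'X k h1 h2 he
    have hq2 : (q.concat hy'A).IsPath := by
      rw [Walk.isPath_def, Walk.support_concat,
        List.nodup_append]
      exact ⟨hq.support_nodup, List.nodup_singleton _,
        fun a ha b hb hab => by simp at hb; subst hb; exact hy'q (hab ▸ ha)⟩
    have hfull : (Walk.cons hzy (Walk.cons hyA.symm (q.concat hy'A))).IsPath := by
      rw [Walk.cons_isPath_iff, Walk.cons_isPath_iff]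
      refine ⟨⟨hq2, ?_⟩, ?_⟩
      · rw [Walk.support_concat]
        simp only [List.mem_append, List.mem_singleton]
        rintro (h | h)
        · exact hyq h
        · exact hyy' h
      · simp only [Walk.support_cons, List.mem_cons]
        rintro (h | h)
        · exact hz.ne' h
        · rw [Walk.support_concat] at h
          simp only [List.mem_append, List.mem_singleton] at h
          rcases h with h | h
          · obtain ⟨k, h1, h2, he⟩ := (hqs _).1 h
            exact hzX k h1 h2 he
          · exact hzy' h
    have := hlen _ _ _ hfull
    simp only [Walk.length_cons, Walk.length_concat, hql] at this
    omega

end AuxCaterpillar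

section AuxEmbed
open SimpleGraph

lemma containsInduced_twoPaths {V : Type*} {G : SimpleGraph V} {n : ℕ}
    (a b : ℕ → V)
    (hainj : ∀ i < n, ∀ j < n, a i = a j → i = j)
    (hbinj : ∀ i < n, ∀ j < n, b i = b j → i = j)
    (habne : ∀ i < n, ∀ j < n, a i ≠ b j)
    (haa : ∀ i < n, ∀ j < n, (G.Adj (a i) (a j) ↔ (i + 1 = j ∨ j + 1 = i)))
    (hbb : ∀ i < n, ∀ j < n, (G.Adj (b i) (b j) ↔ (i + 1 = j ∨ j + 1 = i)))
    (hab : ∀ i < n, ∀ j < n, ¬ G.Adj (a i) (b j)) :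
    ContainsInduced G (twoPaths n) := by
  refine ⟨⟨⟨Sum.elim (fun i : Fin n => a i) (fun i : Fin n => b i), ?_⟩, ?_⟩⟩
  · intro u v h
    cases u with
    | inl i => cases v with
      | inl j =>
        simp only [Sum.elim_inl] at h
        exact congrArg Sum.inl (Fin.ext (hainj i i.isLt j j.isLt h))
      | inr j =>
        simp only [Sum.elim_inl, Sum.elim_inr] at h
        exact absurd h (habne i i.isLt j j.isLt)
    | inr i => cases v with
      | inl j =>
        simp only [Sum.elim_inl, Sum.elim_inr] at h
        exact absurd h.symm (habne j j.isLt i i.isLt)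
      | inr j =>
        simp only [Sum.elim_inr] at h
        exact congrArg Sum.inr (Fin.ext (hbinj i i.isLt j j.isLt h))
  · intro u v
    cases u with
    | inl i => cases v with
      | inl j =>
        show G.Adj (a i) (a j) ↔ (twoPaths n).Adj (Sum.inl i) (Sum.inl j)
        rw [haa i i.isLt j j.isLt]
        simp only [twoPaths, SimpleGraph.sum_adj, pathGraph_adj]
      | inr j =>
        show G.Adj (a i) (b j) ↔ (twoPaths n).Adj (Sum.inl i) (Sum.inr j)
        simp only [twoPaths, SimpleGraph.sum_adj]
        simp [hab i i.isLt j j.isLt]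
    | inr i => cases v with
      | inl j =>
        show G.Adj (b i) (a j) ↔ (twoPaths n).Adj (Sum.inr i) (Sum.inl j)
        simp only [twoPaths, SimpleGraph.sum_adj]
        simp only [iff_false]
        intro h
        exact hab j j.isLt i i.isLt h.symm
      | inr j =>
        show G.Adj (b i) (b j) ↔ (twoPaths n).Adj (Sum.inr i) (Sum.inr j)
        rw [hbb i i.isLt j j.isLt]
        simp only [twoPaths, SimpleGraph.sum_adj, pathGraph_adj]

end AuxEmbed

/-- Let `G` be a caterpillar tree of diameter `2n - 2` (`n ≥ 4`) with central path
`x 1, …, x (2n-3)`, containing no induced `P_n + P_n`.  Then `x (n-2)` or `x n` has no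
leaf neighbours. -/
theorem caterpillar_diam_even_leaf_free {V : Type*} (G : SimpleGraph V) (n : ℕ)
    (hn : 4 ≤ n) (x : ℕ → V) (hcat : IsCaterpillarWithCentralPath G (2 * n - 3) x)
    (hd : IsLongestPathLength G (2 * n - 2))
    (hP : ¬ ContainsInduced G (twoPaths n)) :
    (∀ v : V, ¬ IsLeafNbr G (x (n - 2)) v) ∨ (∀ v : V, ¬ IsLeafNbr G (x n) v) := by
  by_contra hcon
  push_neg at hcon
  obtain ⟨⟨u, hu⟩, ⟨w, hw⟩⟩ := hcon
  obtain ⟨hT, hinj, hadj, hdeg⟩ := id hcat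
  have hlen : ∀ (p q : V) (wk : G.Walk p q), wk.IsPath → wk.length ≤ (2 * n - 3) + 1 := by
    intro p q wk hp
    have := hd.2 p q wk hp
    omega
  obtain ⟨y, hyA, hyU, hyX⟩ := exists_end_leaf (by omega) hcat hlen
  obtain ⟨y'', hy''A, hy''U, hy''X⟩ :=
    exists_end_leaf (by omega) (cat_reverse hcat) hlen
  have hy'A : G.Adj (x (2 * n - 3)) y'' := hy''A
  have hy'U : ∀ z, G.Adj y'' z → z = x (2 * n - 3) := hy''U
  have hy'X : ∀ k, 1 ≤ k → k ≤ 2 * n - 3 → y'' ≠ x k := by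
    intro k h1 h2
    have := hy''X (2 * n - 3 + 1 - k) (by omega) (by omega)
    simpa [show 2 * n - 3 + 1 - (2 * n - 3 + 1 - k) = k from by omega] using this
  have hxinj : ∀ i j, 1 ≤ i → i ≤ 2 * n - 3 → 1 ≤ j → j ≤ 2 * n - 3 →
      x i = x j → i = j := fun i j a b c d h =>
    hinj (Set.mem_Icc.2 ⟨a, b⟩) (Set.mem_Icc.2 ⟨c, d⟩) h
  -- leaf facts for u and w
  have leafU : ∀ (L : V) (p1 : ℕ), G.Adj (x p1) L → (G.neighborSet L).ncard = 1 →
      ∀ z, G.Adj L z → z = x p1 := by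
    intro L p1 hA hcard z hz
    obtain ⟨c, hc⟩ := Set.ncard_eq_one.1 hcard
    have h1 : x p1 ∈ G.neighborSet L := (SimpleGraph.mem_neighborSet _ _ _).2 hA.symm
    have h2 : z ∈ G.neighborSet L := (SimpleGraph.mem_neighborSet _ _ _).2 hz
    rw [hc] at h1 h2
    rw [Set.mem_singleton_iff] at h1 h2
    rw [h2, h1]
  have leafX : ∀ (L : V), (G.neighborSet L).ncard = 1 →
      ∀ k, 1 ≤ k → k ≤ 2 * n - 3 → L ≠ x k := by
    intro L hcard k h1 h2 he
    have : x k ∈ {v : V | 2 ≤ (G.neighborSet v).ncard} := by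
      rw [hdeg]
      exact ⟨k, Set.mem_Icc.2 ⟨h1, h2⟩, rfl⟩
    rw [← he] at this
    simp only [Set.mem_setOf_eq, hcard] at this
    omega
  have huA : G.Adj (x (n - 2)) u := hu.1
  have huU : ∀ z, G.Adj u z → z = x (n - 2) := leafU u (n - 2) hu.1 hu.2
  have huX : ∀ k, 1 ≤ k → k ≤ 2 * n - 3 → u ≠ x k := leafX u hu.2
  have hwA : G.Adj (x n) w := hw.1
  have hwU : ∀ z, G.Adj w z → z = x n := leafU w n hw.1 hw.2
  have hwX : ∀ k, 1 ≤ k → k ≤ 2 * n - 3 → w ≠ x k := leafX w hw.2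
  -- generic leaf helpers
  have leaf_ne : ∀ (L1 L2 : V) (p1 p2 : ℕ), G.Adj (x p1) L1 →
      (∀ z, G.Adj L2 z → z = x p2) → 1 ≤ p1 → p1 ≤ 2 * n - 3 → 1 ≤ p2 →
      p2 ≤ 2 * n - 3 → p1 ≠ p2 → L1 ≠ L2 := by
    intro L1 L2 p1 p2 hA hU a b c d hne he
    subst he
    exact hne (hxinj _ _ a b c d (hU _ hA.symm))
  have leaf_nadj : ∀ (L1 L2 : V) (p1 : ℕ), (∀ z, G.Adj L1 z → z = x p1) →
      (∀ k, 1 ≤ k → k ≤ 2 * n - 3 → L2 ≠ x k) → 1 ≤ p1 → p1 ≤ 2 * n - 3 →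
      ¬ G.Adj L1 L2 :=
    fun L1 L2 p1 hU hX a b hA => hX p1 a b (hU _ hA)
  apply hP
  apply containsInduced_twoPaths
    (fun i => if i = 0 then y else if i = n - 1 then u else x i)
    (fun i => if i = 0 then w else if i = n - 1 then y'' else x (n - 1 + i))
  -- hainj
  · intro i hi j hj h
    split_ifs at h with h1 h2 h3 h4 h5 h6 h7 h8
    any_goals omega
    · exact absurd h (leaf_ne y u 1 (n - 2) hyA huU (by omega) (by omega)
        (by omega) (by omega) (by omega))
    · exact absurd h (hyX j (by omega) (by omega))
    · exact absurd h (leaf_ne u y (n - 2) 1 huA hyU (by omega) (by omega)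
        (by omega) (by omega) (by omega))
    · exact absurd h (huX j (by omega) (by omega))
    · exact absurd h.symm (hyX i (by omega) (by omega))
    · exact absurd h.symm (huX i (by omega) (by omega))
    · exact hxinj i j (by omega) (by omega) (by omega) (by omega) h
  -- hbinj
  · intro i hi j hj h
    split_ifs at h with h1 h2 h3 h4 h5 h6 h7 h8
    any_goals omega
    · exact absurd h (leaf_ne w y'' n (2 * n - 3) hwA hy'U (by omega) (by omega)
        (by omega) (by omega) (by omega))
    · exact absurd h (hwX (n - 1 + j) (by omega) (by omega))
    · exact absurd h (leaf_ne y'' w (2 * n - 3) n hy'A hwU (by omega) (by omega)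
        (by omega) (by omega) (by omega))
    · exact absurd h (hy'X (n - 1 + j) (by omega) (by omega))
    · exact absurd h.symm (hwX (n - 1 + i) (by omega) (by omega))
    · exact absurd h.symm (hy'X (n - 1 + i) (by omega) (by omega))
    · have := hxinj (n - 1 + i) (n - 1 + j) (by omega) (by omega) (by omega)
        (by omega) h
      omega
  -- habne
  · intro i hi j hj
    split_ifs with h1 h2 h3 h4 h5 h6 h7 h8
    · exact leaf_ne y w 1 n hyA hwU (by omega) (by omega) (by omega) (by omega)
        (by omega)
    · exact leaf_ne y y'' 1 (2 * n - 3) hyA hy'U (by omega) (by omega) (by omega)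
        (by omega) (by omega)
    · exact hyX (n - 1 + j) (by omega) (by omega)
    · exact leaf_ne u w (n - 2) n huA hwU (by omega) (by omega) (by omega)
        (by omega) (by omega)
    · exact leaf_ne u y'' (n - 2) (2 * n - 3) huA hy'U (by omega) (by omega)
        (by omega) (by omega) (by omega)
    · exact huX (n - 1 + j) (by omega) (by omega)
    · exact fun h => hwX i (by omega) (by omega) h.symm
    · exact fun h => hy'X i (by omega) (by omega) h.symm
    · intro h
      have := hxinj i (n - 1 + j) (by omega) (by omega) (by omega) (by omega) h
      omega
  -- haa
  · intro i hi j hj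
    split_ifs with h1 h2 h3 h4 h5 h6 h7 h8
    · exact iff_of_false (G.irrefl) (by omega)
    · refine iff_of_false (leaf_nadj y u 1 hyU huX (by omega) (by omega)) (by omega)
    · constructor
      · intro hA
        have := hxinj j 1 (by omega) (by omega) (by omega) (by omega) (hyU _ hA)
        omega
      · intro hor
        have : j = 1 := by omega
        rw [this]
        exact hyA.symm
    · refine iff_of_false (leaf_nadj u y (n - 2) huU hyX (by omega) (by omega))
        (by omega)
    · exact iff_of_false (G.irrefl) (by omega)
    · constructor
      · intro hA
        have := hxinj j (n - 2) (by omega) (by omega) (by omega) (by omega)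
          (huU _ hA)
        omega
      · intro hor
        have : j = n - 2 := by omega
        rw [this]
        exact huA.symm
    · constructor
      · intro hA
        have := hxinj i 1 (by omega) (by omega) (by omega) (by omega)
          (hyU _ hA.symm)
        omega
      · intro hor
        have : i = 1 := by omega
        rw [this]
        exact hyA
    · constructor
      · intro hA
        have := hxinj i (n - 2) (by omega) (by omega) (by omega) (by omega)
          (huU _ hA.symm)
        omega
      · intro hor
        have : i = n - 2 := by omega
        rw [this]
        exact huA
    · constructor
      · intro hA
        rcases Nat.lt_trichotomy i j with hlt | heq | hgt
        · by_contra hno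
          exact nonadj_far hT hinj hadj (by omega : 1 ≤ i) (by omega)
            (by omega : j ≤ 2 * n - 3) hA
        · exact absurd (heq ▸ hA) (G.irrefl)
        · by_contra hno
          exact nonadj_far hT hinj hadj (by omega : 1 ≤ j) (by omega)
            (by omega : i ≤ 2 * n - 3) hA.symm
      · rintro (h | h)
        · subst h
          exact hadj i (by omega) (by omega)
        · subst h
          exact (hadj j (by omega) (by omega)).symm
  -- hbb
  · intro i hi j hj
    split_ifs with h1 h2 h3 h4 h5 h6 h7 h8
    · exact iff_of_false (G.irrefl) (by omega)
    · refine iff_of_false (leaf_nadj w y'' n hwU hy'X (by omega) (by omega))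
        (by omega)
    · constructor
      · intro hA
        have := hxinj (n - 1 + j) n (by omega) (by omega) (by omega) (by omega)
          (hwU _ hA)
        omega
      · intro hor
        have hj1 : n - 1 + j = n := by omega
        rw [hj1]
        exact hwA.symm
    · refine iff_of_false (leaf_nadj y'' w (2 * n - 3) hy'U hwX (by omega)
        (by omega)) (by omega)
    · exact iff_of_false (G.irrefl) (by omega)
    · constructor
      · intro hA
        have := hxinj (n - 1 + j) (2 * n - 3) (by omega) (by omega) (by omega)
          (by omega) (hy'U _ hA)
        omega
      · intro hor
        have hj1 : n - 1 + j = 2 * n - 3 := by omega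
        rw [hj1]
        exact hy'A.symm
    · constructor
      · intro hA
        have := hxinj (n - 1 + i) n (by omega) (by omega) (by omega) (by omega)
          (hwU _ hA.symm)
        omega
      · intro hor
        have hi1 : n - 1 + i = n := by omega
        rw [hi1]
        exact hwA
    · constructor
      · intro hA
        have := hxinj (n - 1 + i) (2 * n - 3) (by omega) (by omega) (by omega)
          (by omega) (hy'U _ hA.symm)
        omega
      · intro hor
        have hi1 : n - 1 + i = 2 * n - 3 := by omega
        rw [hi1]
        exact hy'A
    · constructor
      · intro hA
        rcases Nat.lt_trichotomy i j with hlt | heq | hgt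
        · by_contra hno
          exact nonadj_far hT hinj hadj (by omega : 1 ≤ n - 1 + i) (by omega)
            (by omega : n - 1 + j ≤ 2 * n - 3) hA
        · exact absurd (heq ▸ hA) (G.irrefl)
        · by_contra hno
          exact nonadj_far hT hinj hadj (by omega : 1 ≤ n - 1 + j) (by omega)
            (by omega : n - 1 + i ≤ 2 * n - 3) hA.symm
      · rintro (h | h)
        · have hj1 : n - 1 + j = (n - 1 + i) + 1 := by omega
          rw [hj1]
          exact hadj (n - 1 + i) (by omega) (by omega)
        · have hi1 : n - 1 + i = (n - 1 + j) + 1 := by omega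
          rw [hi1]
          exact (hadj (n - 1 + j) (by omega) (by omega)).symm
  -- hab
  · intro i hi j hj
    split_ifs with h1 h2 h3 h4 h5 h6 h7 h8
    · exact leaf_nadj y w 1 hyU hwX (by omega) (by omega)
    · exact leaf_nadj y y'' 1 hyU hy'X (by omega) (by omega)
    · intro hA
      have := hxinj (n - 1 + j) 1 (by omega) (by omega) (by omega) (by omega)
        (hyU _ hA)
      omega
    · exact leaf_nadj u w (n - 2) huU hwX (by omega) (by omega)
    · exact leaf_nadj u y'' (n - 2) huU hy'X (by omega) (by omega)
    · intro hA
      have := hxinj (n - 1 + j) (n - 2) (by omega) (by omega) (by omega)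
        (by omega) (huU _ hA)
      omega
    · intro hA
      have := hxinj i n (by omega) (by omega) (by omega) (by omega)
        (hwU _ hA.symm)
      omega
    · intro hA
      have := hxinj i (2 * n - 3) (by omega) (by omega) (by omega) (by omega)
        (hy'U _ hA.symm)
      omega
    · exact nonadj_far hT hinj hadj (by omega : 1 ≤ i) (by omega)
        (by omega : n - 1 + j ≤ 2 * n - 3)
end

section
/- Let G be a caterpillar tree of diameter 2n − 1 (n ≥ 4) with central path x_1,…,x_{2n−2}, containing no induced P_n + P_n. Then neither x_{n−2} nor x_{n+1} has any leaf neighbors. -/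
open MvPolynomial

section CatAux
open SimpleGraph
variable {V : Type*} {G : SimpleGraph V} {m : ℕ} {x : ℕ → V}

lemma exists_path_along' {V : Type*} {G : SimpleGraph V} {m : ℕ} {x : ℕ → V}
    (hinj : Set.InjOn x (Set.Icc 1 m))
    (hx : ∀ i : ℕ, 1 ≤ i → i + 1 ≤ m → G.Adj (x i) (x (i + 1)))
    (i j : ℕ) (h1 : 1 ≤ i) (hij : i ≤ j) (hjm : j ≤ m) :
    ∃ p : G.Walk (x i) (x j), p.IsPath ∧ p.length = j - i ∧
      ∀ u ∈ p.support, ∃ k, i ≤ k ∧ k ≤ j ∧ u = x k := by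
  suffices H : ∀ d i, 1 ≤ i → i + d ≤ m →
      ∃ p : G.Walk (x i) (x (i + d)), p.IsPath ∧ p.length = d ∧
        ∀ u ∈ p.support, ∃ k, i ≤ k ∧ k ≤ i + d ∧ u = x k by
    obtain ⟨d, rfl⟩ : ∃ d, j = i + d := ⟨j - i, by omega⟩
    obtain ⟨p, h1', h2', h3'⟩ := H d i h1 (by omega)
    exact ⟨p, h1', by omega, h3'⟩
  intro d
  induction d with
  | zero =>
    intro i hi him
    exact ⟨Walk.nil, by simp, by simp, by simp; exact ⟨i, le_refl i, le_refl i, rfl⟩⟩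
  | succ d ih =>
    intro i hi him
    obtain ⟨p', hp', hl', hs'⟩ := ih (i + 1) (by omega) (by omega)
    have e : i + 1 + d = i + (d + 1) := by omega
    refine ⟨(Walk.cons (hx i hi (by omega)) p').copy rfl (by rw [e]), ?_, ?_, ?_⟩
    · rw [Walk.isPath_copy, Walk.cons_isPath_iff]
      refine ⟨hp', fun hmem => ?_⟩
      obtain ⟨k, hk1, hk2, hk3⟩ := hs' _ hmem
      have : i = k := hinj (by simp [Set.mem_Icc]; omega) (by simp [Set.mem_Icc]; omega) hk3
      omega
    · simp [hl']
    · intro u hu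
      rw [Walk.support_copy, Walk.support_cons] at hu
      rcases List.mem_cons.mp hu with h | h
      · exact ⟨i, by omega, by omega, h⟩
      · obtain ⟨k, hk1, hk2, hk3⟩ := hs' _ h
        exact ⟨k, by omega, by omega, hk3⟩


/-- There is no path between two central vertices through a non-central vertex. -/
lemma no_extra_path (ht : G.IsTree)
    (hinj : Set.InjOn x (Set.Icc 1 m))
    (hx : ∀ i : ℕ, 1 ≤ i → i + 1 ≤ m → G.Adj (x i) (x (i + 1)))
    {k j : ℕ} (hk1 : 1 ≤ k) (hkm : k ≤ m) (hj1 : 1 ≤ j) (hjm : j ≤ m)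
    (p2 : G.Walk (x k) (x j)) (hp2 : p2.IsPath) {w : V} (hwmem : w ∈ p2.support)
    (hwx : ∀ l, 1 ≤ l → l ≤ m → w ≠ x l) : False := by
  obtain ⟨p1, hp1, _, hs1⟩ : ∃ p : G.Walk (x k) (x j), p.IsPath ∧ True ∧
      ∀ u ∈ p.support, ∃ l, 1 ≤ l ∧ l ≤ m ∧ u = x l := by
    rcases le_or_gt k j with h | h
    · obtain ⟨p, hp, _, hs⟩ := exists_path_along' hinj hx k j hk1 h hjm
      exact ⟨p, hp, trivial, fun u hu => by
        obtain ⟨l, h1, h2, h3⟩ := hs u hu; exact ⟨l, by omega, by omega, h3⟩⟩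
    · obtain ⟨p, hp, _, hs⟩ := exists_path_along' hinj hx j k hj1 h.le hkm
      exact ⟨p.reverse, hp.reverse, trivial, fun u hu => by
        rw [Walk.support_reverse, List.mem_reverse] at hu
        obtain ⟨l, h1, h2, h3⟩ := hs u hu; exact ⟨l, by omega, by omega, h3⟩⟩
  obtain ⟨p, -, hup⟩ := ht.existsUnique_path (x k) (x j)
  have heq : p2 = p1 := (hup p2 hp2).trans (hup p1 hp1).symm
  rw [heq] at hwmem
  obtain ⟨l, h1, h2, h3⟩ := hs1 w hwmem
  exact hwx l h1 h2 h3

lemma central_not_adj (ht : G.IsTree)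
    (hinj : Set.InjOn x (Set.Icc 1 m))
    (hx : ∀ i : ℕ, 1 ≤ i → i + 1 ≤ m → G.Adj (x i) (x (i + 1)))
    {i j : ℕ} (h1 : 1 ≤ i) (hij : i < j) (hjm : j ≤ m) (hne : j ≠ i + 1) :
    ¬ G.Adj (x i) (x j) := by
  intro hadj
  obtain ⟨p1, hp1, hl1, -⟩ := exists_path_along' hinj hx i j h1 hij.le hjm
  have hxne : x i ≠ x j := hadj.ne
  have hp2 : (Walk.cons hadj Walk.nil).IsPath := by
    rw [Walk.cons_isPath_iff]; simp [hxne]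
  obtain ⟨p, -, hup⟩ := ht.existsUnique_path (x i) (x j)
  have heq : p1 = Walk.cons hadj Walk.nil := (hup p1 hp1).trans (hup _ hp2).symm
  have := congrArg Walk.length heq
  simp [hl1] at this
  omega


/-- a pendant vertex is adjacent to only one central vertex -/
lemma pendant_adj_unique (ht : G.IsTree)
    (hinj : Set.InjOn x (Set.Icc 1 m))
    (hx : ∀ i : ℕ, 1 ≤ i → i + 1 ≤ m → G.Adj (x i) (x (i + 1)))
    {k j : ℕ} (hk1 : 1 ≤ k) (hkm : k ≤ m) (hj1 : 1 ≤ j) (hjm : j ≤ m)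
    {w : V} (hw : G.Adj (x k) w)
    (hwx : ∀ l, 1 ≤ l → l ≤ m → w ≠ x l) (hadj : G.Adj w (x j)) : j = k := by
  by_contra hne
  have hxkj : x k ≠ x j := fun h => hne (hinj (by simp [Set.mem_Icc]; omega)
    (by simp [Set.mem_Icc]; omega) h).symm
  have hp2 : (Walk.cons hw (Walk.cons hadj Walk.nil)).IsPath := by
    rw [Walk.cons_isPath_iff, Walk.cons_isPath_iff]
    refine ⟨⟨by simp, by simp [(hadj.ne)]⟩, ?_⟩
    simp [hw.ne, hxkj]
  exact no_extra_path ht hinj hx hk1 hkm hj1 hjm _ hp2 (by simp) hwx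

/-- two pendant vertices at distinct central vertices are distinct and non-adjacent -/
lemma pendant_pendant (ht : G.IsTree)
    (hinj : Set.InjOn x (Set.Icc 1 m))
    (hx : ∀ i : ℕ, 1 ≤ i → i + 1 ≤ m → G.Adj (x i) (x (i + 1)))
    {k l : ℕ} (hk1 : 1 ≤ k) (hkm : k ≤ m) (hl1 : 1 ≤ l) (hlm : l ≤ m) (hkl : k ≠ l)
    {w w' : V} (hw : G.Adj (x k) w) (hw' : G.Adj (x l) w')
    (hwx : ∀ i, 1 ≤ i → i ≤ m → w ≠ x i)
    (hw'x : ∀ i, 1 ≤ i → i ≤ m → w' ≠ x i) :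
    w ≠ w' ∧ ¬ G.Adj w w' := by
  have hne : w ≠ w' := by
    rintro rfl
    exact hkl (pendant_adj_unique ht hinj hx hk1 hkm hl1 hlm hw hwx hw'.symm).symm
  refine ⟨hne, fun hadj => ?_⟩
  have hxkl : x k ≠ x l := fun h => hkl (hinj (by simp [Set.mem_Icc]; omega)
    (by simp [Set.mem_Icc]; omega) h)
  have hp2 : (Walk.cons hw (Walk.cons hadj (Walk.cons hw'.symm Walk.nil))).IsPath := by
    rw [Walk.cons_isPath_iff, Walk.cons_isPath_iff, Walk.cons_isPath_iff]
    refine ⟨⟨⟨by simp, by simp [hw'x l hl1 hlm]⟩, by simp [hne, hwx l hl1 hlm]⟩, ?_⟩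
    simp [hw.ne, hxkl]
    exact fun h => (hw'x k hk1 hkm h.symm).elim
  exact no_extra_path ht hinj hx hk1 hkm hl1 hlm _ hp2 (by simp) hwx

end CatAux

open SimpleGraph in
lemma key_lemma {V : Type*} {G : SimpleGraph V} {n : ℕ} (hn : 4 ≤ n) {x : ℕ → V}
    (hcat : IsCaterpillarWithCentralPath G (2 * n - 2) x) {v : V}
    (hv : IsLeafNbr G (x (n - 2)) v) : ContainsInduced G (twoPaths n) := by
  obtain ⟨ht, hinj, hx, hdeg⟩ := hcat
  set m := 2 * n - 2 with hm
  -- the neighborhood of the leaf v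
  have hNv : G.neighborSet v = {x (n - 2)} := by
    obtain ⟨a, ha⟩ := Set.ncard_eq_one.mp hv.2
    have : x (n - 2) ∈ G.neighborSet v := hv.1.symm
    rw [ha] at this ⊢
    rw [Set.mem_singleton_iff] at this
    rw [this]
  have hvadj : ∀ u, G.Adj v u → u = x (n - 2) := by
    intro u hu
    have : u ∈ G.neighborSet v := hu
    rwa [hNv, Set.mem_singleton_iff] at this
  -- membership in the image gives high degree
  have hdeg2 : ∀ l, 1 ≤ l → l ≤ m → 2 ≤ (G.neighborSet (x l)).ncard := by
    intro l h1 h2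
    have : x l ∈ x '' Set.Icc 1 m := ⟨l, by simp [Set.mem_Icc]; omega, rfl⟩
    rw [← hdeg] at this
    exact this
  have hvx : ∀ l, 1 ≤ l → l ≤ m → v ≠ x l := by
    intro l h1 h2 he
    have := hdeg2 l h1 h2
    rw [← he] at this
    have h1' : (G.neighborSet v).ncard = 1 := hv.2
    omega
  -- find the extra neighbor w of x 1
  have hw2 : 1 < (G.neighborSet (x 1)).ncard := by have := hdeg2 1 (by omega) (by omega); omega
  obtain ⟨w, hwmem, hwne⟩ := Set.exists_ne_of_one_lt_ncard hw2 (x 2)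
  have hw : G.Adj (x 1) w := hwmem
  have hwx : ∀ l, 1 ≤ l → l ≤ m → w ≠ x l := by
    intro l h1 h2 he
    rcases Nat.lt_trichotomy l 2 with h | h | h
    · interval_cases l
      exact hw.ne he.symm
    · exact hwne (h ▸ he)
    · exact central_not_adj ht hinj hx (le_refl 1) (by omega) (by omega) (by omega) (he ▸ hw)
  -- find the extra neighbor w' of x m
  have hw'2 : 1 < (G.neighborSet (x m)).ncard := by have := hdeg2 m (by omega) (by omega); omega
  obtain ⟨w', hw'mem, hw'ne⟩ := Set.exists_ne_of_one_lt_ncard hw'2 (x (m - 1))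
  have hw' : G.Adj (x m) w' := hw'mem
  have hw'x : ∀ l, 1 ≤ l → l ≤ m → w' ≠ x l := by
    intro l h1 h2 he
    rcases Nat.lt_trichotomy l (m - 1) with h | h | h
    · exact central_not_adj ht hinj hx h1 (by omega) (le_refl m) (by omega) (he ▸ hw').symm
    · exact hw'ne (h ▸ he)
    · have hlm : l = m := by omega
      rw [hlm] at he
      exact hw'.ne he.symm
  -- pendant uniqueness facts
  have hwonly : ∀ j, 1 ≤ j → j ≤ m → G.Adj w (x j) → j = 1 :=
    fun j h1 h2 ha => pendant_adj_unique ht hinj hx (le_refl 1) (by omega) h1 h2 hw hwx ha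
  have hw'only : ∀ j, 1 ≤ j → j ≤ m → G.Adj w' (x j) → j = m :=
    fun j h1 h2 ha => pendant_adj_unique ht hinj hx (by omega) (le_refl m) h1 h2 hw' hw'x ha
  have hww' := pendant_pendant ht hinj hx (le_refl 1) (by omega) (by omega) (le_refl m)
    (by omega) hw hw' hwx hw'x
  have hwv : w ≠ v := by
    rintro rfl
    have := hvadj (x 1) hw.symm
    have : (1 : ℕ) = n - 2 := hinj (by simp [Set.mem_Icc]; omega) (by simp [Set.mem_Icc]; omega) this
    omega
  have hw'v : w' ≠ v := by
    rintro rfl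
    have := hvadj (x m) hw'.symm
    have : m = n - 2 := hinj (by simp [Set.mem_Icc]; omega) (by simp [Set.mem_Icc]; omega) this
    omega
  have hwv' : ¬ G.Adj w v := fun h => hwx (n - 2) (by omega) (by omega) (hvadj w h.symm)
  have hw'v' : ¬ G.Adj w' v := fun h => hw'x (n - 2) (by omega) (by omega) (hvadj w' h.symm)
  -- the two induced paths
  set P : ℕ → V := fun a => if a = 0 then w else if a = n - 1 then v else x a with hP
  set Q : ℕ → V := fun b => if b = n - 1 then w' else x (n + b) with hQ
  have hP0 : P 0 = w := by simp [hP]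
  have hPlast : ∀ a : ℕ, a = n - 1 → P a = v := fun a ha => by
    simp only [hP]; rw [if_neg (by omega), if_pos ha]
  have hPmid : ∀ a : ℕ, a ≠ 0 → a ≠ n - 1 → P a = x a := fun a h0 h1 => by
    simp only [hP]; rw [if_neg h0, if_neg h1]
  have hQlast : ∀ b : ℕ, b = n - 1 → Q b = w' := fun b hb => by
    simp only [hQ]; rw [if_pos hb]
  have hQmid : ∀ b : ℕ, b ≠ n - 1 → Q b = x (n + b) := fun b hb => by
    simp only [hQ]; rw [if_neg hb]
  -- Adjacency characterization within P
  have hPadj : ∀ a b : ℕ, a < b → b < n → (G.Adj (P a) (P b) ↔ a + 1 = b) := by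
    intro a b hab hbn
    have hb0 : b ≠ 0 := by omega
    by_cases ha0 : a = 0
    · by_cases hb1 : b = n - 1
      · rw [ha0, hP0, hPlast b hb1]
        exact iff_of_false hwv' (by omega)
      · rw [ha0, hP0, hPmid b hb0 hb1]
        constructor
        · intro h
          have := hwonly b (by omega) (by omega) h
          omega
        · intro h
          have : b = 1 := by omega
          rw [this]; exact hw.symm
    · have ha1 : 1 ≤ a := by omega
      have han : a ≤ n - 2 := by omega
      rw [hPmid a ha0 (by omega)]
      by_cases hb1 : b = n - 1
      · rw [hPlast b hb1]
        constructor
        · intro h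
          have := hvadj (x a) h.symm
          have : a = n - 2 := hinj (by simp [Set.mem_Icc]; omega)
            (by simp [Set.mem_Icc]; omega) this
          omega
        · intro h
          have : a = n - 2 := by omega
          rw [this]; exact hv.1
      · rw [hPmid b hb0 hb1]
        constructor
        · intro h
          by_contra hc
          exact central_not_adj ht hinj hx ha1 hab (by omega) (by omega) h
        · intro h
          have : b = a + 1 := by omega
          rw [this]; exact hx a ha1 (by omega)
  -- Adjacency characterization within Q
  have hQadj : ∀ a b : ℕ, a < b → b < n → (G.Adj (Q a) (Q b) ↔ a + 1 = b) := by
    intro a b hab hbn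
    have han : a ≤ n - 2 := by omega
    rw [hQmid a (by omega)]
    by_cases hb1 : b = n - 1
    · rw [hQlast b hb1]
      constructor
      · intro h
        have := hw'only (n + a) (by omega) (by omega) h.symm
        omega
      · intro h
        have : n + a = m := by omega
        rw [this]; exact hw'
    · rw [hQmid b hb1]
      constructor
      · intro h
        by_contra hc
        exact central_not_adj ht hinj hx (by omega) (by omega) (by omega : n + b ≤ m)
          (by omega) h
      · intro h
        have : n + b = (n + a) + 1 := by omega
        rw [this]; exact hx (n + a) (by omega) (by omega)
  -- No adjacency between P and Q
  have hPQ : ∀ a b : ℕ, a < n → b < n → ¬ G.Adj (P a) (Q b) := by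
    intro a b han hbn
    by_cases hb1 : b = n - 1
    · rw [hQlast b hb1]
      by_cases ha0 : a = 0
      · rw [ha0, hP0]; exact hww'.2
      · by_cases ha1 : a = n - 1
        · rw [hPlast a ha1]; exact fun h => hw'v' h.symm
        · rw [hPmid a ha0 ha1]
          intro h
          have := hw'only a (by omega) (by omega) h.symm
          omega
    · rw [hQmid b hb1]
      by_cases ha0 : a = 0
      · rw [ha0, hP0]
        intro h
        have := hwonly (n + b) (by omega) (by omega) h
        omega
      · by_cases ha1 : a = n - 1
        · rw [hPlast a ha1]
          intro h
          have := hvadj (x (n + b)) h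
          have : n + b = n - 2 := hinj (by simp [Set.mem_Icc]; omega)
            (by simp [Set.mem_Icc]; omega) this.symm ▸ rfl
          omega
        · rw [hPmid a ha0 ha1]
          exact central_not_adj ht hinj hx (by omega) (by omega) (by omega : n + b ≤ m)
            (by omega)
  -- Injectivity facts
  have hPinj : ∀ a b : ℕ, a < b → b < n → P a ≠ P b := by
    intro a b hab hbn
    have hb0 : b ≠ 0 := by omega
    by_cases ha0 : a = 0
    · by_cases hb1 : b = n - 1
      · rw [ha0, hP0, hPlast b hb1]; exact hwv
      · rw [ha0, hP0, hPmid b hb0 hb1]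
        exact hwx b (by omega) (by omega)
    · rw [hPmid a ha0 (by omega)]
      by_cases hb1 : b = n - 1
      · rw [hPlast b hb1]
        exact fun h => hvx a (by omega) (by omega) h.symm
      · rw [hPmid b hb0 hb1]
        intro h
        have : a = b := hinj (by simp [Set.mem_Icc]; omega) (by simp [Set.mem_Icc]; omega) h
        omega
  have hQinj : ∀ a b : ℕ, a < b → b < n → Q a ≠ Q b := by
    intro a b hab hbn
    rw [hQmid a (by omega)]
    by_cases hb1 : b = n - 1
    · rw [hQlast b hb1]
      exact fun h => hw'x (n + a) (by omega) (by omega) h.symm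
    · rw [hQmid b hb1]
      intro h
      have : n + a = n + b := hinj (by simp [Set.mem_Icc]; omega)
        (by simp [Set.mem_Icc]; omega) h
      omega
  have hPQne : ∀ a b : ℕ, a < n → b < n → P a ≠ Q b := by
    intro a b han hbn
    by_cases hb1 : b = n - 1
    · rw [hQlast b hb1]
      by_cases ha0 : a = 0
      · rw [ha0, hP0]; exact hww'.1
      · by_cases ha1 : a = n - 1
        · rw [hPlast a ha1]; exact fun h => hw'v h.symm
        · rw [hPmid a ha0 ha1]
          exact fun h => hw'x a (by omega) (by omega) h.symm
    · rw [hQmid b hb1]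
      by_cases ha0 : a = 0
      · rw [ha0, hP0]
        exact hwx (n + b) (by omega) (by omega)
      · by_cases ha1 : a = n - 1
        · rw [hPlast a ha1]
          exact hvx (n + b) (by omega) (by omega)
        · rw [hPmid a ha0 ha1]
          intro h
          have : a = n + b := hinj (by simp [Set.mem_Icc]; omega)
            (by simp [Set.mem_Icc]; omega) h
          omega
  -- build the embedding
  refine ⟨⟨⟨Sum.elim (fun i : Fin n => P i.val) (fun j : Fin n => Q j.val), ?_⟩, ?_⟩⟩
  · rintro (a | a) (b | b) h <;> simp only [Sum.elim_inl, Sum.elim_inr] at h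
    · rcases Nat.lt_trichotomy a.val b.val with hc | hc | hc
      · exact absurd h (hPinj a.val b.val hc b.isLt)
      · simp [Sum.inl.injEq, Fin.ext_iff, hc]
      · exact absurd h.symm (hPinj b.val a.val hc a.isLt)
    · exact absurd h (hPQne a.val b.val a.isLt b.isLt)
    · exact absurd h.symm (hPQne b.val a.val b.isLt a.isLt)
    · rcases Nat.lt_trichotomy a.val b.val with hc | hc | hc
      · exact absurd h (hQinj a.val b.val hc b.isLt)
      · simp [Sum.inr.injEq, Fin.ext_iff, hc]
      · exact absurd h.symm (hQinj b.val a.val hc a.isLt)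
  · rintro (a | a) (b | b)
    · show G.Adj (P a.val) (P b.val) ↔ (twoPaths n).Adj (Sum.inl a) (Sum.inl b)
      have h2 : (twoPaths n).Adj (Sum.inl a) (Sum.inl b) ↔
          (a.val + 1 = b.val ∨ b.val + 1 = a.val) := by
        simp [twoPaths, SimpleGraph.sum_adj, pathGraph_adj]
      rw [h2]
      rcases Nat.lt_trichotomy a.val b.val with hc | hc | hc
      · rw [hPadj a.val b.val hc b.isLt]; omega
      · constructor
        · intro h; exact absurd (hc ▸ h) (G.irrefl)
        · intro h; omega
      · rw [adj_comm, hPadj b.val a.val hc a.isLt]; omega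
    · show G.Adj (P a.val) (Q b.val) ↔ (twoPaths n).Adj (Sum.inl a) (Sum.inr b)
      have h2 : ¬ (twoPaths n).Adj (Sum.inl a) (Sum.inr b) := by
        simp [twoPaths, SimpleGraph.sum_adj]
      simp only [h2, iff_false]
      exact hPQ a.val b.val a.isLt b.isLt
    · show G.Adj (Q a.val) (P b.val) ↔ (twoPaths n).Adj (Sum.inr a) (Sum.inl b)
      have h2 : ¬ (twoPaths n).Adj (Sum.inr a) (Sum.inl b) := by
        simp [twoPaths, SimpleGraph.sum_adj]
      simp only [h2, iff_false]
      exact fun h => hPQ b.val a.val b.isLt a.isLt h.symm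
    · show G.Adj (Q a.val) (Q b.val) ↔ (twoPaths n).Adj (Sum.inr a) (Sum.inr b)
      have h2 : (twoPaths n).Adj (Sum.inr a) (Sum.inr b) ↔
          (a.val + 1 = b.val ∨ b.val + 1 = a.val) := by
        simp [twoPaths, SimpleGraph.sum_adj, pathGraph_adj]
      rw [h2]
      rcases Nat.lt_trichotomy a.val b.val with hc | hc | hc
      · rw [hQadj a.val b.val hc b.isLt]; omega
      · constructor
        · intro h; exact absurd (hc ▸ h) (G.irrefl)
        · intro h; omega
      · rw [adj_comm, hQadj b.val a.val hc a.isLt]; omega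


open SimpleGraph in
lemma caterpillar_reverse {V : Type*} {G : SimpleGraph V} {m : ℕ} {x : ℕ → V}
    (h : IsCaterpillarWithCentralPath G m x) :
    IsCaterpillarWithCentralPath G m (fun i => x (m + 1 - i)) := by
  obtain ⟨ht, hinj, hx, hdeg⟩ := h
  refine ⟨ht, ?_, ?_, ?_⟩
  · intro a ha b hb hab
    simp only [Set.mem_Icc] at ha hb
    have : m + 1 - a = m + 1 - b := hinj (by simp [Set.mem_Icc]; omega)
      (by simp [Set.mem_Icc]; omega) hab
    omega
  · intro i h1 h2
    have e1 : m + 1 - i = (m - i) + 1 := by omega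
    have e2 : m + 1 - (i + 1) = m - i := by omega
    simp only []
    rw [e1, e2]
    exact (hx (m - i) (by omega) (by omega)).symm
  · rw [hdeg]
    ext u
    simp only [Set.mem_image, Set.mem_Icc]
    constructor
    · rintro ⟨k, ⟨hk1, hk2⟩, rfl⟩
      exact ⟨m + 1 - k, ⟨by omega, by omega⟩, by congr 1; omega⟩
    · rintro ⟨k, ⟨hk1, hk2⟩, rfl⟩
      exact ⟨m + 1 - k, ⟨by omega, by omega⟩, rfl⟩

/-- Let `G` be a caterpillar tree of diameter `2n - 1` (`n ≥ 4`) with central path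
`x 1, …, x (2n-2)`, containing no induced `P_n + P_n`.  Then neither `x (n-2)` nor
`x (n+1)` has any leaf neighbour. -/
theorem caterpillar_diam_odd_leaf_free {V : Type*} (G : SimpleGraph V) (n : ℕ)
    (hn : 4 ≤ n) (x : ℕ → V) (hcat : IsCaterpillarWithCentralPath G (2 * n - 2) x)
    (hd : IsLongestPathLength G (2 * n - 1))
    (hP : ¬ ContainsInduced G (twoPaths n)) :
    (∀ v : V, ¬ IsLeafNbr G (x (n - 2)) v) ∧ (∀ v : V, ¬ IsLeafNbr G (x (n + 1)) v) := by
  constructor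
  · intro v hv
    exact hP (key_lemma hn hcat hv)
  · intro v hv
    apply hP
    have hcat' := caterpillar_reverse hcat
    refine key_lemma (v := v) hn hcat' ?_
    show IsLeafNbr G ((fun i => x (2 * n - 2 + 1 - i)) (n - 2)) v
    simp only []
    have e : 2 * n - 2 + 1 - (n - 2) = n + 1 := by omega
    rw [e]
    exact hv
end
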